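/- arXiv:2405.03568 — 6 statements merged into one kernel-verified Lean document; each statement's English description precedes it below -/
import Mathlib

section
/- Let X = X_1 + ... + X_n be a sum of (not necessarily independent) Bernoulli random variables and Y = Y_1 + ... + Y_n a sum of independent Bernoulli random variables. If for each i, Pr[X_i = 1 | X_1, ..., X_{i-1}] ≤ Pr[Y_i = 1] (almost surely), then X is stochastically dominated by Y, i.e., Pr[X ≥ x] ≤ Pr[Y ≥ x] for all x ≥ 0. -/
open MeasureTheory ProbabilityTheory

/-- If `X = X₁ + ⋯ + Xₙ` is a sum of (not necessarily independent) Bernoulli random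
variables whose conditional probability of being 1 given the past is bounded above by
the success probability of independent Bernoulli variables `Yᵢ`, then `X` is
stochastically dominated by `Y = Y₁ + ⋯ + Yₙ`. -/
theorem stmt_0 {Ω : Type*} [MeasurableSpace Ω] (μ : Measure Ω) [IsProbabilityMeasure μ]
    (n : ℕ) (X Y : Fin n → Ω → ℕ)
    (hX : ∀ i, Measurable (X i)) (hY : ∀ i, Measurable (Y i))
    (hXb : ∀ i ω, X i ω ≤ 1) (hYb : ∀ i ω, Y i ω ≤ 1)
    (hYindep : iIndepFun Y μ)
    (hcond : ∀ (i : Fin n) (v : Fin n → ℕ),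
      μ {ω | ∀ j < i, X j ω = v j} ≠ 0 →
      μ[|{ω | ∀ j < i, X j ω = v j}] {ω | X i ω = 1} ≤ μ {ω | Y i ω = 1}) :
    ∀ x : ℕ, μ {ω | x ≤ ∑ i, X i ω} ≤ μ {ω | x ≤ ∑ i, Y i ω} := by
  classical
  have key : ∀ k : ℕ, ∀ x : ℕ,
      μ {ω | x ≤ ∑ j ∈ Finset.univ.filter (fun j : Fin n => (j : ℕ) < k), X j ω}
      ≤ μ {ω | x ≤ ∑ j ∈ Finset.univ.filter (fun j : Fin n => (j : ℕ) < k), Y j ω} := by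
    intro k
    induction k with
    | zero =>
      intro x
      have h0 : Finset.univ.filter (fun j : Fin n => (j : ℕ) < 0) = ∅ := by
        apply Finset.filter_false_of_mem; intro j _; omega
      rw [h0]
      simp
    | succ k ih =>
      by_cases hk : k < n
      · -- main step
        intro x
        set i : Fin n := ⟨k, hk⟩ with hi
        set s : Finset (Fin n) := Finset.univ.filter (fun j : Fin n => (j : ℕ) < k) with hs
        have hnot : i ∉ s := by simp [hs, hi]
        have hins : Finset.univ.filter (fun j : Fin n => (j : ℕ) < k + 1) = insert i s := by
          ext j
          simp only [Finset.mem_filter, Finset.mem_univ, true_and, Finset.mem_insert, hs, hi,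
            Fin.ext_iff]
          omega
        rw [hins]
        rcases x with _ | m
        · simp
        -- x = m + 1
        set p := μ {ω | Y i ω = 1} with hp
        set q := μ {ω | Y i ω = 0} with hq
        set SX : Ω → ℕ := fun ω => ∑ j ∈ s, X j ω with hSX
        set SY : Ω → ℕ := fun ω => ∑ j ∈ s, Y j ω with hSY
        have hSXmeas : Measurable SX := Finset.measurable_sum s (fun j _ => hX j)
        have hSYmeas : Measurable SY := Finset.measurable_sum s (fun j _ => hY j)
        have hm0 : MeasurableSet {ω | Y i ω = 0} := hY i (measurableSet_singleton 0)
        have hpq : p + q = 1 := by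
          have hd : Disjoint {ω | Y i ω = 1} {ω | Y i ω = 0} := by
            rw [Set.disjoint_left]
            intro ω h1 h2
            simp only [Set.mem_setOf_eq] at h1 h2
            omega
          have h1 : {ω | Y i ω = 1} ∪ {ω | Y i ω = 0} = Set.univ := by
            ext ω; have := hYb i ω
            simp only [Set.mem_union, Set.mem_setOf_eq, Set.mem_univ, iff_true]
            omega
          rw [hp, hq, ← measure_union hd hm0, h1, measure_univ]
        -- Y side decomposition
        have hYdec : μ {ω | m + 1 ≤ ∑ j ∈ insert i s, Y j ω}
            = p * μ {ω | m ≤ SY ω} + q * μ {ω | m + 1 ≤ SY ω} := by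
          have hset : {ω | m + 1 ≤ ∑ j ∈ insert i s, Y j ω}
              = ({ω | Y i ω = 1} ∩ {ω | m ≤ SY ω}) ∪ ({ω | Y i ω = 0} ∩ {ω | m + 1 ≤ SY ω}) := by
            ext ω
            have hy := hYb i ω
            simp only [Set.mem_setOf_eq, Set.mem_union, Set.mem_inter_iff, hSY,
              Finset.sum_insert hnot]
            omega
          have hd : Disjoint ({ω | Y i ω = 1} ∩ {ω | m ≤ SY ω})
              ({ω | Y i ω = 0} ∩ {ω | m + 1 ≤ SY ω}) := by
            rw [Set.disjoint_left]
            rintro ω ⟨h1, -⟩ ⟨h2, -⟩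
            simp only [Set.mem_setOf_eq] at h1 h2
            omega
          have hmeas2 : MeasurableSet ({ω | Y i ω = 0} ∩ {ω | m + 1 ≤ SY ω}) :=
            (hY i (measurableSet_singleton 0)).inter (hSYmeas measurableSet_Ici)
          rw [hset, measure_union hd hmeas2]
          have hfac : ∀ (a b : ℕ), μ ({ω | Y i ω = a} ∩ {ω | b ≤ SY ω})
              = μ {ω | Y i ω = a} * μ {ω | b ≤ SY ω} := by
            intro a b
            have h := hYindep.indepFun_finsetSum_of_notMem hY hnot
            have he : (∑ j ∈ s, Y j) = SY := by
              funext ω; exact Finset.sum_apply ω s Y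
            rw [he] at h
            have := h.symm.measure_inter_preimage_eq_mul {a} (Set.Ici b)
              (measurableSet_singleton a) measurableSet_Ici
            exact this
          rw [hfac 1 m, hfac 0 (m+1)]
        rw [hYdec]
        -- X side
        have hE : ∀ v : Fin n → ℕ, MeasurableSet {ω | ∀ j < i, X j ω = v j} := by
          intro v
          have : {ω | ∀ j < i, X j ω = v j} = ⋂ j, ⋂ (_ : j < i), (X j) ⁻¹' {v j} := by
            ext ω; simp [Set.mem_iInter]
          rw [this]
          exact MeasurableSet.iInter fun j => MeasurableSet.iInter fun _ =>
            hX j (measurableSet_singleton _)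
        set V : Finset (Fin n → ℕ) :=
          Finset.image (fun f : Fin n → Fin 2 => fun j : Fin n =>
            if (j : ℕ) < k then (f j : ℕ) else 0) Finset.univ with hV
        have hV0 : ∀ v ∈ V, ∀ j : Fin n, ¬ (j : ℕ) < k → v j = 0 := by
          intro v hv j hj
          rw [hV] at hv
          obtain ⟨f, -, rfl⟩ := Finset.mem_image.mp hv
          simp [hj]
        have hVdisj : ∀ v ∈ V, ∀ w ∈ V, v ≠ w →
            Disjoint {ω | ∀ j < i, X j ω = v j} {ω | ∀ j < i, X j ω = w j} := by
          intro v hv w hw hvw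
          rw [Set.disjoint_left]
          intro ω h1 h2
          apply hvw
          funext j
          by_cases hj : (j : ℕ) < k
          · have hji : j < i := by rw [Fin.lt_def]; exact hj
            rw [← h1 j hji, ← h2 j hji]
          · rw [hV0 v hv j hj, hV0 w hw j hj]
        have hpart : ∀ T : Set Ω, MeasurableSet T →
            μ (T ∩ {ω | SX ω = m})
            = ∑ v ∈ V.filter (fun v => ∑ j ∈ s, v j = m), μ (T ∩ {ω | ∀ j < i, X j ω = v j}) := by
          intro T hT
          have hseteq : T ∩ {ω | SX ω = m}
              = ⋃ v ∈ V.filter (fun v => ∑ j ∈ s, v j = m),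
                  T ∩ {ω | ∀ j < i, X j ω = v j} := by
            ext ω
            simp only [Set.mem_inter_iff, Set.mem_setOf_eq, Set.mem_iUnion, Finset.mem_filter]
            constructor
            · rintro ⟨hωT, hωS⟩
              refine ⟨fun j => if (j : ℕ) < k then X j ω else 0, ⟨⟨?_, ?_⟩, hωT, ?_⟩⟩
              · rw [hV, Finset.mem_image]
                refine ⟨fun j => if h : (j : ℕ) < k then ⟨X j ω, by
                  have := hXb j ω; omega⟩ else 0, Finset.mem_univ _, ?_⟩
                funext j
                by_cases hj : (j : ℕ) < k <;> simp [hj]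
              · rw [← hωS, hSX]
                apply Finset.sum_congr rfl
                intro j hj
                rw [hs, Finset.mem_filter] at hj
                simp [hj.2]
              · intro j hj
                rw [Fin.lt_def] at hj
                have hj' : (j : ℕ) < k := hj
                simp [hj']
            · rintro ⟨v, ⟨⟨hvV, hvs⟩, hωT, hωE⟩⟩
              refine ⟨hωT, ?_⟩
              rw [hSX, ← hvs]
              apply Finset.sum_congr rfl
              intro j hj
              rw [hs, Finset.mem_filter] at hj
              exact hωE j (by rw [Fin.lt_def]; exact hj.2)
            
          rw [hseteq]
          rw [measure_biUnion_finset ?_ ?_]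
          · intro v hv w hw hvw
            simp only [Finset.coe_filter, Set.mem_setOf_eq] at hv hw
            exact (hVdisj v hv.1 w hw.1 hvw).mono Set.inter_subset_right Set.inter_subset_right
          · intro v _
            exact hT.inter (hE v)
        -- the conditional bound
        have hXone : μ ({ω | X i ω = 1} ∩ {ω | SX ω = m}) ≤ p * μ {ω | SX ω = m} := by
          rw [hpart {ω | X i ω = 1} (hX i (measurableSet_singleton 1))]
          have hXm : μ {ω | SX ω = m}
              = ∑ v ∈ V.filter (fun v => ∑ j ∈ s, v j = m), μ {ω | ∀ j < i, X j ω = v j} := by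
            have := hpart Set.univ MeasurableSet.univ
            simpa using this
          rw [hXm, Finset.mul_sum]
          apply Finset.sum_le_sum
          intro v _
          by_cases h0 : μ {ω | ∀ j < i, X j ω = v j} = 0
          · calc μ ({ω | X i ω = 1} ∩ {ω | ∀ j < i, X j ω = v j})
                ≤ μ {ω | ∀ j < i, X j ω = v j} := measure_mono Set.inter_subset_right
              _ = 0 := h0
              _ ≤ _ := zero_le
          · have hc := hcond i v h0
            rw [cond_apply (hE v)] at hc
            have hne : μ {ω | ∀ j < i, X j ω = v j} ≠ ⊤ := measure_ne_top μ _
            calc μ ({ω | X i ω = 1} ∩ {ω | ∀ j < i, X j ω = v j})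
                = μ ({ω | ∀ j < i, X j ω = v j} ∩ {ω | X i ω = 1}) := by rw [Set.inter_comm]
              _ = μ {ω | ∀ j < i, X j ω = v j} *
                  ((μ {ω | ∀ j < i, X j ω = v j})⁻¹ *
                    μ ({ω | ∀ j < i, X j ω = v j} ∩ {ω | X i ω = 1})) := by
                  rw [← mul_assoc, ENNReal.mul_inv_cancel h0 hne, one_mul]
              _ ≤ μ {ω | ∀ j < i, X j ω = v j} * p := by
                  exact mul_le_mul_right hc _
              _ = p * μ {ω | ∀ j < i, X j ω = v j} := mul_comm _ _
        -- combine
        have hXsub : {ω | m + 1 ≤ ∑ j ∈ insert i s, X j ω}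
            ⊆ ({ω | X i ω = 1} ∩ {ω | SX ω = m}) ∪ {ω | m + 1 ≤ SX ω} := by
          intro ω hω
          have hx := hXb i ω
          simp only [Set.mem_setOf_eq, Finset.sum_insert hnot] at hω
          simp only [Set.mem_union, Set.mem_inter_iff, Set.mem_setOf_eq, hSX]
          omega
        have hsplit : μ {ω | m ≤ SX ω} = μ {ω | SX ω = m} + μ {ω | m + 1 ≤ SX ω} := by
          have hu : {ω | m ≤ SX ω} = {ω | SX ω = m} ∪ {ω | m + 1 ≤ SX ω} := by
            ext ω; simp only [Set.mem_setOf_eq, Set.mem_union]; omega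
          have hd : Disjoint {ω | SX ω = m} {ω | m + 1 ≤ SX ω} := by
            rw [Set.disjoint_left]; intro ω h1 h2
            simp only [Set.mem_setOf_eq] at h1 h2; omega
          rw [hu, measure_union hd (hSXmeas measurableSet_Ici)]
        calc μ {ω | m + 1 ≤ ∑ j ∈ insert i s, X j ω}
            ≤ μ (({ω | X i ω = 1} ∩ {ω | SX ω = m}) ∪ {ω | m + 1 ≤ SX ω}) :=
              measure_mono hXsub
          _ ≤ μ ({ω | X i ω = 1} ∩ {ω | SX ω = m}) + μ {ω | m + 1 ≤ SX ω} :=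
              measure_union_le _ _
          _ ≤ p * μ {ω | SX ω = m} + μ {ω | m + 1 ≤ SX ω} := add_le_add_left hXone _
          _ = p * μ {ω | SX ω = m} + (p + q) * μ {ω | m + 1 ≤ SX ω} := by rw [hpq, one_mul]
          _ = p * (μ {ω | SX ω = m} + μ {ω | m + 1 ≤ SX ω}) + q * μ {ω | m + 1 ≤ SX ω} := by
              ring
          _ = p * μ {ω | m ≤ SX ω} + q * μ {ω | m + 1 ≤ SX ω} := by rw [hsplit]
          _ ≤ p * μ {ω | m ≤ SY ω} + q * μ {ω | m + 1 ≤ SY ω} := by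
              exact add_le_add (mul_le_mul_right (ih m) _) (mul_le_mul_right (ih (m+1)) _)
      · -- k ≥ n : filter unchanged
        intro x
        have heq : Finset.univ.filter (fun j : Fin n => (j : ℕ) < k + 1)
            = Finset.univ.filter (fun j : Fin n => (j : ℕ) < k) := by
          apply Finset.filter_congr
          intro j _
          have := j.isLt
          omega
        rw [heq]
        exact ih x
  intro x
  have hfull : Finset.univ.filter (fun j : Fin n => (j : ℕ) < n) = Finset.univ := by
    apply Finset.filter_true_of_mem
    intro j _
    exact j.isLt
  have := key n x
  rw [hfull] at this
  exact this
end

section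
/- Let N be a birth-death chain on ℕ with p(n) ≤ C/n and q(n) ≥ D for all n > 0 (constants C, D > 0), p(0) = q(0) = 0, started at state n. Then the expected extinction time E[E(n)] is Θ(n): it is at least n and at most C'·n for some constant C' depending only on C, D. -/
open MeasureTheory ProbabilityTheory
open scoped ENNReal

/-- Extinction time (first hitting time of the absorbing state `0`) of a process
`N`, valued in `ℝ≥0∞` (it is `∞` if the process never hits `0`). -/
noncomputable def extinctionTime {Ω : Type*} (N : ℕ → Ω → ℕ) (ω : Ω) : ℝ≥0∞ :=
  ⨅ (t : ℕ) (_ : N t ω = 0), (t : ℝ≥0∞)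

open scoped ENNReal

noncomputable def Gseq (C D : ℝ) : ℕ → ℝ
  | 0 => 2 / D
  | k + 1 => (1 + C * Gseq C D k) / D

lemma Gseq_pos {C D : ℝ} (hC : 0 < C) (hD : 0 < D) : ∀ k, 0 < Gseq C D k
  | 0 => by simp only [Gseq]; positivity
  | k + 1 => by
      have := Gseq_pos hC hD k
      simp only [Gseq]
      have : 0 < 1 + C * Gseq C D k := by nlinarith
      positivity

noncomputable def mZero (C D : ℝ) : ℕ := ⌈2 * C / D⌉₊ + 1

noncomputable def gfun (C D : ℝ) (m : ℕ) : ℝ := Gseq C D (mZero C D - m)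

noncomputable def ffun (C D : ℝ) (m : ℕ) : ℝ := ∑ j ∈ Finset.range m, gfun C D (j + 1)

noncomputable def Mconst (C D : ℝ) : ℝ := ∑ k ∈ Finset.range (mZero C D + 1), Gseq C D k

lemma gfun_pos {C D : ℝ} (hC : 0 < C) (hD : 0 < D) (m : ℕ) : 0 < gfun C D m :=
  Gseq_pos hC hD _

lemma ffun_zero (C D : ℝ) : ffun C D 0 = 0 := by simp [ffun]

lemma ffun_nonneg {C D : ℝ} (hC : 0 < C) (hD : 0 < D) (m : ℕ) : 0 ≤ ffun C D m :=
  Finset.sum_nonneg fun j _ => (gfun_pos hC hD _).le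

lemma ffun_succ (C D : ℝ) (m : ℕ) : ffun C D (m + 1) = ffun C D m + gfun C D (m + 1) :=
  Finset.sum_range_succ _ _

lemma Mconst_pos {C D : ℝ} (hC : 0 < C) (hD : 0 < D) : 0 < Mconst C D :=
  Finset.sum_pos (fun k _ => Gseq_pos hC hD k) (by simp [mZero])

lemma gfun_le_Mconst {C D : ℝ} (hC : 0 < C) (hD : 0 < D) (m : ℕ) :
    gfun C D m ≤ Mconst C D := by
  refine Finset.single_le_sum (f := fun k => Gseq C D k) (fun k _ => (Gseq_pos hC hD k).le) ?_
  simp only [Finset.mem_range]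
  omega

lemma ffun_le {C D : ℝ} (hC : 0 < C) (hD : 0 < D) (n : ℕ) :
    ffun C D n ≤ Mconst C D * n := by
  calc ffun C D n ≤ ∑ j ∈ Finset.range n, Mconst C D :=
        Finset.sum_le_sum fun j _ => gfun_le_Mconst hC hD _
    _ = Mconst C D * n := by simp [mul_comm]

lemma core_ineq {C D : ℝ} (hC : 0 < C) (hD : 0 < D) (m : ℕ) (hm : 0 < m) :
    (C / m) * gfun C D (m + 1) + 1 ≤ D * gfun C D m := by
  rcases le_or_gt (mZero C D) m with h | h
  · -- g m = g (m+1) = 2/D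
    have h1 : mZero C D - m = 0 := by omega
    have h2 : mZero C D - (m + 1) = 0 := by omega
    have hgm : gfun C D m = 2 / D := by simp [gfun, h1, Gseq]
    have hgm1 : gfun C D (m + 1) = 2 / D := by simp [gfun, h2, Gseq]
    rw [hgm, hgm1]
    have hceil : ⌈2 * C / D⌉₊ ≤ m := by unfold mZero at h; omega
    have hm0 : (2 * C / D) ≤ (m : ℝ) := le_trans (Nat.le_ceil _) (by exact_mod_cast hceil)
    have hmpos : (0:ℝ) < m := by exact_mod_cast hm
    have hCm : C / m ≤ D / 2 := by
      rw [div_le_div_iff₀ hmpos (by norm_num)]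
      rw [div_le_iff₀ hD] at hm0
      nlinarith
    have hg : (0:ℝ) < 2 / D := by positivity
    have : (C / m) * (2 / D) ≤ (D / 2) * (2 / D) := by nlinarith
    have hDD : (D / 2) * (2 / D) = 1 := by field_simp
    rw [hDD] at this
    have : D * (2 / D) = 2 := by field_simp
    linarith [hDD ▸ (by nlinarith [hg] : (C / m) * (2 / D) ≤ (D / 2) * (2 / D))]
  · -- m < mZero
    have h1 : mZero C D - m = (mZero C D - (m + 1)) + 1 := by omega
    set k := mZero C D - (m + 1) with hk
    have hgm : gfun C D m = (1 + C * Gseq C D k) / D := by rw [gfun, h1]; rfl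
    have hgm1 : gfun C D (m + 1) = Gseq C D k := rfl
    rw [hgm, hgm1]
    have hDg : D * ((1 + C * Gseq C D k) / D) = 1 + C * Gseq C D k := by field_simp
    rw [hDg]
    have hGk : 0 < Gseq C D k := Gseq_pos hC hD k
    have hmpos : (1:ℝ) ≤ m := by exact_mod_cast hm
    have : C / m ≤ C := by
      rw [div_le_iff₀ (by linarith)]
      nlinarith
    nlinarith

lemma drift_ineq {C D : ℝ} (hC : 0 < C) (hD : 0 < D) (m : ℕ) (hm : 0 < m)
    {pp qq : ℝ} (hp0 : 0 ≤ pp) (hq0 : 0 ≤ qq) (hpq : pp + qq ≤ 1)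
    (hpC : pp ≤ C / m) (hqD : D ≤ qq) :
    ffun C D (m + 1) * pp + ffun C D (m - 1) * qq + ffun C D m * (1 - pp - qq) + 1
      ≤ ffun C D m := by
  obtain ⟨m', rfl⟩ : ∃ m', m = m' + 1 := ⟨m - 1, by omega⟩
  have e1 : ffun C D (m' + 1 + 1) = ffun C D (m' + 1) + gfun C D (m' + 1 + 1) := ffun_succ _ _ _
  have e2 : ffun C D (m' + 1) = ffun C D m' + gfun C D (m' + 1) := ffun_succ _ _ _
  have e3 : (m' + 1 - 1 : ℕ) = m' := rfl
  rw [e3, e1]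
  have hg1 : 0 < gfun C D (m' + 1) := gfun_pos hC hD _
  have hg2 : 0 < gfun C D (m' + 1 + 1) := gfun_pos hC hD _
  have hcore := core_ineq hC hD (m' + 1) (Nat.succ_pos _)
  -- p * g(m+1) + 1 ≤ q * g m
  have key : pp * gfun C D (m' + 1 + 1) + 1 ≤ qq * gfun C D (m' + 1) := by
    have h1 : pp * gfun C D (m' + 1 + 1) ≤ (C / (m' + 1 : ℕ)) * gfun C D (m' + 1 + 1) := by
      nlinarith
    have h2 : D * gfun C D (m' + 1) ≤ qq * gfun C D (m' + 1) := by nlinarith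
    linarith
  nlinarith [e2]

section Cyl
variable {Ω : Type} [MeasurableSpace Ω]

def pathExt (t : ℕ) (v : Fin (t + 1) → ℕ) : ℕ → ℕ :=
  fun s => if h : s < t + 1 then v ⟨s, h⟩ else 0

def cyl (N : ℕ → Ω → ℕ) (t : ℕ) (v : Fin (t + 1) → ℕ) : Set Ω :=
  {ω | ∀ s ≤ t, N s ω = pathExt t v s}

lemma pathExt_apply (t : ℕ) (v : Fin (t + 1) → ℕ) (s : ℕ) (hs : s ≤ t) :
    pathExt t v s = v ⟨s, Nat.lt_succ_of_le hs⟩ := dif_pos _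

lemma mem_cyl_last {N : ℕ → Ω → ℕ} {t : ℕ} {v : Fin (t + 1) → ℕ} {ω : Ω}
    (h : ω ∈ cyl N t v) : N t ω = pathExt t v t := h t le_rfl

lemma cyl_measurableSet (N : ℕ → Ω → ℕ) (hN : ∀ t, Measurable (N t)) (t : ℕ)
    (v : Fin (t + 1) → ℕ) : MeasurableSet (cyl N t v) := by
  have : cyl N t v = ⋂ (s : ℕ) (_ : s ≤ t), (N s) ⁻¹' {pathExt t v s} := by
    ext ω; simp [cyl]
  rw [this]
  exact MeasurableSet.iInter fun s => MeasurableSet.iInter fun _ =>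
    (hN s) (measurableSet_singleton _)

lemma cyl_disjoint (N : ℕ → Ω → ℕ) (t : ℕ) : Pairwise (Function.onFun Disjoint (cyl N t)) := by
  intro v w hvw
  refine Set.disjoint_left.2 fun ω hv hw => hvw ?_
  funext s
  have hs : (s : ℕ) ≤ t := Nat.lt_succ_iff.mp s.2
  have h1 := hv s.1 hs
  have h2 := hw s.1 hs
  rw [pathExt_apply _ _ _ hs] at h1 h2
  have h3 : v ⟨s.1, Nat.lt_succ_of_le hs⟩ = w ⟨s.1, Nat.lt_succ_of_le hs⟩ := h1.symm.trans h2
  simpa using h3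

lemma cyl_cover (N : ℕ → Ω → ℕ) (t : ℕ) : ⋃ v, cyl N t v = Set.univ := by
  ext ω
  simp only [Set.mem_iUnion, Set.mem_univ, iff_true]
  exact ⟨fun s => N s ω, fun s hs => by rw [pathExt_apply _ _ _ hs]⟩

lemma lintegral_cyl (N : ℕ → Ω → ℕ) (hN : ∀ t, Measurable (N t)) (μ : Measure Ω) (t : ℕ)
    (g : Ω → ℝ≥0∞) :
    ∫⁻ ω, g ω ∂μ = ∑' v : Fin (t + 1) → ℕ, ∫⁻ ω in cyl N t v, g ω ∂μ := by
  have h := lintegral_iUnion (μ := μ) (cyl_measurableSet N hN t) (cyl_disjoint N t) g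
  rw [cyl_cover] at h
  simpa using h

lemma measure_cyl (N : ℕ → Ω → ℕ) (hN : ∀ t, Measurable (N t)) (μ : Measure Ω) (t : ℕ)
    (B : Set Ω) (hB : MeasurableSet B) :
    μ B = ∑' v : Fin (t + 1) → ℕ, μ (cyl N t v ∩ B) := by
  calc μ B = μ (⋃ v, cyl N t v ∩ B) := by
        rw [← Set.iUnion_inter, cyl_cover, Set.univ_inter]
    _ = ∑' v, μ (cyl N t v ∩ B) := by
        refine measure_iUnion ?_ fun v => (cyl_measurableSet N hN t v).inter hB
        exact fun v w hvw => ((cyl_disjoint N t) hvw).mono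
          Set.inter_subset_left Set.inter_subset_left

end Cyl
section Chain
variable {Ω : Type} [MeasurableSpace Ω] {μ : MeasureTheory.Measure Ω}
  [MeasureTheory.IsProbabilityMeasure μ] {N : ℕ → Ω → ℕ} {p q : ℕ → ℝ}

lemma cond_to_measure (hN : ∀ t, Measurable (N t)) {t : ℕ} {v : Fin (t + 1) → ℕ}
    (hμA : μ (cyl N t v) ≠ 0) {S : Set Ω} {r : ℝ}
    (h : μ[|cyl N t v] S = ENNReal.ofReal r) :
    μ (cyl N t v ∩ S) = ENNReal.ofReal r * μ (cyl N t v) := by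
  rw [cond_apply (cyl_measurableSet N hN t v)] at h
  have h2 := congrArg (μ (cyl N t v) * ·) h
  rwa [← mul_assoc, ENNReal.mul_inv_cancel hμA (measure_ne_top μ _), one_mul,
    mul_comm] at h2

lemma cyl_step_measures
    (hN : ∀ t, Measurable (N t))
    (hp : ∀ m, 0 ≤ p m) (hq : ∀ m, 0 ≤ q m) (hpq : ∀ m, p m + q m ≤ 1)
    (hb : ∀ (t : ℕ) (path : ℕ → ℕ),
      μ {ω | ∀ s ≤ t, N s ω = path s} ≠ 0 →
      μ[|{ω | ∀ s ≤ t, N s ω = path s}] {ω | N (t + 1) ω = path t + 1}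
        = ENNReal.ofReal (p (path t)))
    (hd : ∀ (t : ℕ) (path : ℕ → ℕ), 0 < path t →
      μ {ω | ∀ s ≤ t, N s ω = path s} ≠ 0 →
      μ[|{ω | ∀ s ≤ t, N s ω = path s}] {ω | N (t + 1) ω = path t - 1}
        = ENNReal.ofReal (q (path t)))
    (hh : ∀ (t : ℕ) (path : ℕ → ℕ),
      μ {ω | ∀ s ≤ t, N s ω = path s} ≠ 0 →
      μ[|{ω | ∀ s ≤ t, N s ω = path s}] {ω | N (t + 1) ω = path t}
        = ENNReal.ofReal (1 - p (path t) - q (path t)))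
    (t : ℕ) (v : Fin (t + 1) → ℕ) (hμA : μ (cyl N t v) ≠ 0)
    (hm : 0 < pathExt t v t) :
    μ (cyl N t v ∩ {ω | N (t + 1) ω = pathExt t v t + 1})
        = ENNReal.ofReal (p (pathExt t v t)) * μ (cyl N t v)
    ∧ μ (cyl N t v ∩ {ω | N (t + 1) ω = pathExt t v t - 1})
        = ENNReal.ofReal (q (pathExt t v t)) * μ (cyl N t v)
    ∧ μ (cyl N t v ∩ {ω | N (t + 1) ω = pathExt t v t})
        = ENNReal.ofReal (1 - p (pathExt t v t) - q (pathExt t v t)) * μ (cyl N t v)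
    ∧ μ (cyl N t v \ ({ω | N (t + 1) ω = pathExt t v t + 1}
        ∪ {ω | N (t + 1) ω = pathExt t v t - 1}
        ∪ {ω | N (t + 1) ω = pathExt t v t})) = 0 := by
  have h1 : μ (cyl N t v ∩ {ω | N (t + 1) ω = pathExt t v t + 1})
      = ENNReal.ofReal (p (pathExt t v t)) * μ (cyl N t v) :=
    cond_to_measure hN hμA (hb t (pathExt t v) hμA)
  have h2 : μ (cyl N t v ∩ {ω | N (t + 1) ω = pathExt t v t - 1})
      = ENNReal.ofReal (q (pathExt t v t)) * μ (cyl N t v) :=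
    cond_to_measure hN hμA (hd t (pathExt t v) hm hμA)
  have h3 : μ (cyl N t v ∩ {ω | N (t + 1) ω = pathExt t v t})
      = ENNReal.ofReal (1 - p (pathExt t v t) - q (pathExt t v t)) * μ (cyl N t v) :=
    cond_to_measure hN hμA (hh t (pathExt t v) hμA)
  refine ⟨h1, h2, h3, ?_⟩
  set m := pathExt t v t with hmdef
  set A := cyl N t v with hA
  set S1 : Set Ω := {ω | N (t + 1) ω = m + 1} with hS1def
  set S2 : Set Ω := {ω | N (t + 1) ω = m - 1} with hS2def
  set S3 : Set Ω := {ω | N (t + 1) ω = m} with hS3def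
  have hAm : MeasurableSet A := cyl_measurableSet N hN t v
  have hS1 : MeasurableSet S1 := (hN (t + 1)) (measurableSet_singleton _)
  have hS2 : MeasurableSet S2 := (hN (t + 1)) (measurableSet_singleton _)
  have hS3 : MeasurableSet S3 := (hN (t + 1)) (measurableSet_singleton _)
  have hd12 : Disjoint (A ∩ S1) (A ∩ S2) := by
    refine Set.disjoint_left.2 fun ω h1' h2' => ?_
    have e1 := h1'.2; have e2 := h2'.2
    simp only [hS1def, hS2def, Set.mem_setOf_eq] at e1 e2
    omega
  have hd13 : Disjoint (A ∩ S1) (A ∩ S3) := by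
    refine Set.disjoint_left.2 fun ω h1' h2' => ?_
    have e1 := h1'.2; have e2 := h2'.2
    simp only [hS1def, hS3def, Set.mem_setOf_eq] at e1 e2
    omega
  have hd23 : Disjoint (A ∩ S2) (A ∩ S3) := by
    refine Set.disjoint_left.2 fun ω h1' h2' => ?_
    have e1 := h1'.2; have e2 := h2'.2
    simp only [hS2def, hS3def, Set.mem_setOf_eq] at e1 e2
    omega
  have hsum : μ (A ∩ (S1 ∪ S2 ∪ S3)) = μ A := by
    have e : A ∩ (S1 ∪ S2 ∪ S3) = (A ∩ S1) ∪ (A ∩ S2) ∪ (A ∩ S3) := by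
      rw [Set.inter_union_distrib_left, Set.inter_union_distrib_left]
    rw [e, measure_union (hd13.union_left hd23) (hAm.inter hS3),
      measure_union hd12 (hAm.inter hS2), h1, h2, h3]
    have hp' := hp m; have hq' := hq m
    have hpq' : (0:ℝ) ≤ 1 - p m - q m := by linarith [hpq m]
    rw [← add_mul, ← add_mul, ← ENNReal.ofReal_add hp' hq',
      ← ENNReal.ofReal_add (by linarith) hpq']
    have : p m + q m + (1 - p m - q m) = 1 := by ring
    rw [this, ENNReal.ofReal_one, one_mul]
  have h := measure_inter_add_diff (μ := μ) A ((hS1.union hS2).union hS3)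
  rw [hsum] at h
  exact (ENNReal.add_right_inj (measure_ne_top μ A)).1 (h.trans (add_zero _).symm)

end Chain
section Chain2
variable {Ω : Type} [MeasurableSpace Ω] {μ : MeasureTheory.Measure Ω}
  [MeasureTheory.IsProbabilityMeasure μ] {N : ℕ → Ω → ℕ} {p q : ℕ → ℝ} {C D : ℝ}

lemma cyl_step_le (hC : 0 < C) (hD : 0 < D)
    (hN : ∀ t, Measurable (N t))
    (hp : ∀ m, 0 ≤ p m) (hq : ∀ m, 0 ≤ q m) (hpq : ∀ m, p m + q m ≤ 1)
    (hp0 : p 0 = 0) (hq0 : q 0 = 0)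
    (hpC : ∀ m : ℕ, 0 < m → p m ≤ C / m) (hqD : ∀ m : ℕ, 0 < m → D ≤ q m)
    (hb : ∀ (t : ℕ) (path : ℕ → ℕ),
      μ {ω | ∀ s ≤ t, N s ω = path s} ≠ 0 →
      μ[|{ω | ∀ s ≤ t, N s ω = path s}] {ω | N (t + 1) ω = path t + 1}
        = ENNReal.ofReal (p (path t)))
    (hd : ∀ (t : ℕ) (path : ℕ → ℕ), 0 < path t →
      μ {ω | ∀ s ≤ t, N s ω = path s} ≠ 0 →
      μ[|{ω | ∀ s ≤ t, N s ω = path s}] {ω | N (t + 1) ω = path t - 1}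
        = ENNReal.ofReal (q (path t)))
    (hh : ∀ (t : ℕ) (path : ℕ → ℕ),
      μ {ω | ∀ s ≤ t, N s ω = path s} ≠ 0 →
      μ[|{ω | ∀ s ≤ t, N s ω = path s}] {ω | N (t + 1) ω = path t}
        = ENNReal.ofReal (1 - p (path t) - q (path t)))
    (t : ℕ) (v : Fin (t + 1) → ℕ) :
    (∫⁻ ω in cyl N t v, ENNReal.ofReal (ffun C D (N (t + 1) ω)) ∂μ)
      + μ (cyl N t v ∩ {ω | N t ω ≠ 0})
    ≤ ENNReal.ofReal (ffun C D (pathExt t v t)) * μ (cyl N t v) := by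
  set m := pathExt t v t with hmdef
  set A := cyl N t v with hAdef
  have hAm : MeasurableSet A := cyl_measurableSet N hN t v
  by_cases hμA : μ A = 0
  · rw [setLIntegral_measure_zero _ _ hμA, measure_mono_null Set.inter_subset_left hμA]
    simp
  by_cases hm : m = 0
  · -- absorbing state
    have h3 : μ (A ∩ {ω | N (t + 1) ω = m}) = ENNReal.ofReal (1 - p m - q m) * μ A :=
      cond_to_measure hN hμA (hh t (pathExt t v) hμA)
    have hpm : p m = 0 := by rw [hm, hp0]
    have hqm : q m = 0 := by rw [hm, hq0]
    rw [hpm, hqm] at h3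
    simp only [sub_zero, ENNReal.ofReal_one, one_mul] at h3
    have hS3 : MeasurableSet {ω | N (t + 1) ω = m} := (hN (t + 1)) (measurableSet_singleton _)
    have hrest : μ (A \ {ω | N (t + 1) ω = m}) = 0 := by
      have h := measure_inter_add_diff (μ := μ) A hS3
      rw [h3] at h
      exact (ENNReal.add_right_inj (measure_ne_top μ A)).1 (h.trans (add_zero _).symm)
    have hinter : A ∩ {ω | N t ω ≠ 0} = ∅ := by
      ext ω
      simp only [Set.mem_inter_iff, Set.mem_setOf_eq, Set.mem_empty_iff_false, iff_false,
        not_and]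
      intro hcyl
      have := mem_cyl_last hcyl
      rw [← hmdef, hm] at this
      simp [this]
    have hint : (∫⁻ ω in A, ENNReal.ofReal (ffun C D (N (t + 1) ω)) ∂μ) = 0 := by
      have e : A = (A ∩ {ω | N (t + 1) ω = m}) ∪ (A \ {ω | N (t + 1) ω = m}) :=
        (Set.inter_union_diff _ _).symm
      rw [e, lintegral_union (hAm.diff hS3)
        (Set.disjoint_sdiff_right.mono_left Set.inter_subset_right),
        setLIntegral_measure_zero _ _ hrest, add_zero]
      have : ∀ ω ∈ A ∩ {ω | N (t + 1) ω = m},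
          ENNReal.ofReal (ffun C D (N (t + 1) ω)) = 0 := by
        intro ω hω
        have : N (t + 1) ω = m := hω.2
        rw [this, hm, ffun_zero, ENNReal.ofReal_zero]
      rw [setLIntegral_congr_fun (hAm.inter hS3) this]
      simp
    rw [hint, hinter]
    simp
  · -- m ≥ 1
    have hm' : 0 < m := Nat.pos_of_ne_zero hm
    obtain ⟨h1, h2, h3, hrest⟩ := cyl_step_measures hN hp hq hpq hb hd hh t v hμA hm'
    rw [← hmdef, ← hAdef] at h1 h2 h3 hrest
    set S1 : Set Ω := {ω | N (t + 1) ω = m + 1} with hS1def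
    set S2 : Set Ω := {ω | N (t + 1) ω = m - 1} with hS2def
    set S3 : Set Ω := {ω | N (t + 1) ω = m} with hS3def
    have hS1 : MeasurableSet S1 := (hN (t + 1)) (measurableSet_singleton _)
    have hS2 : MeasurableSet S2 := (hN (t + 1)) (measurableSet_singleton _)
    have hS3 : MeasurableSet S3 := (hN (t + 1)) (measurableSet_singleton _)
    set U : Set Ω := S1 ∪ S2 ∪ S3 with hUdef
    have hU : MeasurableSet U := (hS1.union hS2).union hS3
    have hconst : ∀ (S : Set Ω) (k : ℕ), MeasurableSet S → (∀ ω ∈ A ∩ S, N (t + 1) ω = k) →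
        (∫⁻ ω in A ∩ S, ENNReal.ofReal (ffun C D (N (t + 1) ω)) ∂μ)
          = ENNReal.ofReal (ffun C D k) * μ (A ∩ S) := by
      intro S k hS hk
      rw [setLIntegral_congr_fun (hAm.inter hS)
        (fun ω hω => by rw [hk ω hω]), setLIntegral_const]
    have hd12 : Disjoint (A ∩ S1) (A ∩ S2) := Set.disjoint_left.2 fun ω h1' h2' => by
      have e1 := h1'.2; have e2 := h2'.2
      simp only [hS1def, hS2def, Set.mem_setOf_eq] at e1 e2; omega
    have hd13 : Disjoint (A ∩ S1) (A ∩ S3) := Set.disjoint_left.2 fun ω h1' h2' => by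
      have e1 := h1'.2; have e2 := h2'.2
      simp only [hS1def, hS3def, Set.mem_setOf_eq] at e1 e2; omega
    have hd23 : Disjoint (A ∩ S2) (A ∩ S3) := Set.disjoint_left.2 fun ω h1' h2' => by
      have e1 := h1'.2; have e2 := h2'.2
      simp only [hS2def, hS3def, Set.mem_setOf_eq] at e1 e2; omega
    have hint : (∫⁻ ω in A, ENNReal.ofReal (ffun C D (N (t + 1) ω)) ∂μ)
        = ENNReal.ofReal (ffun C D (m + 1)) * (ENNReal.ofReal (p m) * μ A)
          + ENNReal.ofReal (ffun C D (m - 1)) * (ENNReal.ofReal (q m) * μ A)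
          + ENNReal.ofReal (ffun C D m) * (ENNReal.ofReal (1 - p m - q m) * μ A) := by
      have e : A = (A ∩ U) ∪ (A \ U) := (Set.inter_union_diff _ _).symm
      conv_lhs => rw [e]
      rw [lintegral_union (hAm.diff hU)
        (Set.disjoint_sdiff_right.mono_left Set.inter_subset_right),
        setLIntegral_measure_zero _ _ hrest, add_zero]
      have e2 : A ∩ U = (A ∩ S1) ∪ (A ∩ S2) ∪ (A ∩ S3) := by
        rw [hUdef, Set.inter_union_distrib_left, Set.inter_union_distrib_left]
      rw [e2, lintegral_union (hAm.inter hS3) (hd13.union_left hd23),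
        lintegral_union (hAm.inter hS2) hd12,
        hconst S1 (m + 1) hS1 (fun ω hω => hω.2),
        hconst S2 (m - 1) hS2 (fun ω hω => hω.2),
        hconst S3 m hS3 (fun ω hω => hω.2), h1, h2, h3]
    have hinter : A ∩ {ω | N t ω ≠ 0} = A := by
      refine Set.inter_eq_self_of_subset_left fun ω hω => ?_
      have := mem_cyl_last hω
      rw [← hmdef] at this
      simp only [Set.mem_setOf_eq, this]
      omega
    rw [hint, hinter]
    have hfnn := ffun_nonneg hC hD
    have hpq' : (0:ℝ) ≤ 1 - p m - q m := by linarith [hpq m]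
    have hcore : ENNReal.ofReal (ffun C D (m + 1)) * ENNReal.ofReal (p m)
        + ENNReal.ofReal (ffun C D (m - 1)) * ENNReal.ofReal (q m)
        + ENNReal.ofReal (ffun C D m) * ENNReal.ofReal (1 - p m - q m) + 1
        ≤ ENNReal.ofReal (ffun C D m) := by
      have hn1 : 0 ≤ ffun C D (m + 1) * p m := mul_nonneg (hfnn _) (hp m)
      have hn2 : 0 ≤ ffun C D (m - 1) * q m := mul_nonneg (hfnn _) (hq m)
      have hn3 : 0 ≤ ffun C D m * (1 - p m - q m) := mul_nonneg (hfnn _) hpq'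
      rw [← ENNReal.ofReal_mul (hfnn _), ← ENNReal.ofReal_mul (hfnn _),
        ← ENNReal.ofReal_mul (hfnn _), ← ENNReal.ofReal_one,
        ← ENNReal.ofReal_add hn1 hn2,
        ← ENNReal.ofReal_add (add_nonneg hn1 hn2) hn3,
        ← ENNReal.ofReal_add (add_nonneg (add_nonneg hn1 hn2) hn3) zero_le_one]
      exact ENNReal.ofReal_le_ofReal
        (drift_ineq hC hD m hm' (hp m) (hq m) (hpq m) (hpC m hm') (hqD m hm'))
    calc ENNReal.ofReal (ffun C D (m + 1)) * (ENNReal.ofReal (p m) * μ A)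
          + ENNReal.ofReal (ffun C D (m - 1)) * (ENNReal.ofReal (q m) * μ A)
          + ENNReal.ofReal (ffun C D m) * (ENNReal.ofReal (1 - p m - q m) * μ A) + μ A
        = (ENNReal.ofReal (ffun C D (m + 1)) * ENNReal.ofReal (p m)
          + ENNReal.ofReal (ffun C D (m - 1)) * ENNReal.ofReal (q m)
          + ENNReal.ofReal (ffun C D m) * ENNReal.ofReal (1 - p m - q m) + 1) * μ A := by
          ring
      _ ≤ ENNReal.ofReal (ffun C D m) * μ A := mul_le_mul' hcore le_rfl

end Chain2
section Chain3
variable {Ω : Type} [MeasurableSpace Ω] {μ : MeasureTheory.Measure Ω}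
  [MeasureTheory.IsProbabilityMeasure μ] {N : ℕ → Ω → ℕ} {p q : ℕ → ℝ} {C D : ℝ}

lemma supermartingale_bound (hC : 0 < C) (hD : 0 < D)
    (hN : ∀ t, Measurable (N t))
    (hp : ∀ m, 0 ≤ p m) (hq : ∀ m, 0 ≤ q m) (hpq : ∀ m, p m + q m ≤ 1)
    (hp0 : p 0 = 0) (hq0 : q 0 = 0)
    (hpC : ∀ m : ℕ, 0 < m → p m ≤ C / m) (hqD : ∀ m : ℕ, 0 < m → D ≤ q m)
    (hb : ∀ (t : ℕ) (path : ℕ → ℕ),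
      μ {ω | ∀ s ≤ t, N s ω = path s} ≠ 0 →
      μ[|{ω | ∀ s ≤ t, N s ω = path s}] {ω | N (t + 1) ω = path t + 1}
        = ENNReal.ofReal (p (path t)))
    (hd : ∀ (t : ℕ) (path : ℕ → ℕ), 0 < path t →
      μ {ω | ∀ s ≤ t, N s ω = path s} ≠ 0 →
      μ[|{ω | ∀ s ≤ t, N s ω = path s}] {ω | N (t + 1) ω = path t - 1}
        = ENNReal.ofReal (q (path t)))
    (hh : ∀ (t : ℕ) (path : ℕ → ℕ),
      μ {ω | ∀ s ≤ t, N s ω = path s} ≠ 0 →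
      μ[|{ω | ∀ s ≤ t, N s ω = path s}] {ω | N (t + 1) ω = path t}
        = ENNReal.ofReal (1 - p (path t) - q (path t)))
    (n : ℕ) (hstart : ∀ ω, N 0 ω = n) :
    ∀ t : ℕ, (∫⁻ ω, ENNReal.ofReal (ffun C D (N t ω)) ∂μ)
      + ∑ s ∈ Finset.range t, μ {ω | N s ω ≠ 0} ≤ ENNReal.ofReal (ffun C D n) := by
  intro t
  induction t with
  | zero =>
      simp only [Finset.range_zero, Finset.sum_empty, add_zero]
      have : (fun ω => ENNReal.ofReal (ffun C D (N 0 ω)))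
          = fun _ => ENNReal.ofReal (ffun C D n) := by
        funext ω; rw [hstart ω]
      rw [lintegral_congr (fun ω => by rw [hstart ω]), lintegral_const, measure_univ, mul_one]
  | succ t ih =>
      have hmeas : MeasurableSet {ω | N t ω ≠ 0} :=
        ((hN t) (measurableSet_singleton 0)).compl
      have hstep : (∫⁻ ω, ENNReal.ofReal (ffun C D (N (t + 1) ω)) ∂μ)
          + μ {ω | N t ω ≠ 0} ≤ ∫⁻ ω, ENNReal.ofReal (ffun C D (N t ω)) ∂μ := by
        rw [lintegral_cyl N hN μ t (fun ω => ENNReal.ofReal (ffun C D (N (t + 1) ω))),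
          lintegral_cyl N hN μ t (fun ω => ENNReal.ofReal (ffun C D (N t ω))),
          measure_cyl N hN μ t _ hmeas, ← ENNReal.tsum_add]
        refine ENNReal.tsum_le_tsum fun v => ?_
        refine le_trans (cyl_step_le hC hD hN hp hq hpq hp0 hq0 hpC hqD hb hd hh t v) ?_
        rw [setLIntegral_congr_fun (cyl_measurableSet N hN t v)
          (fun ω hω => by rw [mem_cyl_last hω]),
          setLIntegral_const]
      calc (∫⁻ ω, ENNReal.ofReal (ffun C D (N (t + 1) ω)) ∂μ)
            + ∑ s ∈ Finset.range (t + 1), μ {ω | N s ω ≠ 0}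
          = ((∫⁻ ω, ENNReal.ofReal (ffun C D (N (t + 1) ω)) ∂μ) + μ {ω | N t ω ≠ 0})
            + ∑ s ∈ Finset.range t, μ {ω | N s ω ≠ 0} := by
            rw [Finset.sum_range_succ]; ring
        _ ≤ (∫⁻ ω, ENNReal.ofReal (ffun C D (N t ω)) ∂μ)
            + ∑ s ∈ Finset.range t, μ {ω | N s ω ≠ 0} := add_le_add hstep le_rfl
        _ ≤ ENNReal.ofReal (ffun C D n) := ih

end Chain3
/-- A nice birth-death chain started at `n` (birth probability `p(m) ≤ C/m`, death
probability `q(m) ≥ D`, `0` the unique absorbing state) has expected extinction time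
`Θ(n)`: it is at least `n`, and at most `C'·n` for a constant `C'` depending only
on `C` and `D`. -/
theorem stmt_5 (C D : ℝ) (hC : 0 < C) (hD : 0 < D) :
    ∃ C' : ℝ, 0 < C' ∧
      ∀ (Ω : Type) (_ : MeasurableSpace Ω) (μ : Measure Ω), IsProbabilityMeasure μ →
      ∀ (N : ℕ → Ω → ℕ) (p q : ℕ → ℝ) (n : ℕ),
        (∀ t, Measurable (N t)) →
        (∀ m, 0 ≤ p m) → (∀ m, 0 ≤ q m) → (∀ m, p m + q m ≤ 1) →
        p 0 = 0 → q 0 = 0 →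
        (∀ m : ℕ, 0 < m → p m ≤ C / m) →
        (∀ m : ℕ, 0 < m → D ≤ q m) →
        (∀ ω, N 0 ω = n) →
        -- birth transitions, conditionally on any past trajectory
        (∀ (t : ℕ) (path : ℕ → ℕ),
          μ {ω | ∀ s ≤ t, N s ω = path s} ≠ 0 →
          μ[|{ω | ∀ s ≤ t, N s ω = path s}] {ω | N (t + 1) ω = path t + 1}
            = ENNReal.ofReal (p (path t))) →
        -- death transitions
        (∀ (t : ℕ) (path : ℕ → ℕ), 0 < path t →
          μ {ω | ∀ s ≤ t, N s ω = path s} ≠ 0 →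
          μ[|{ω | ∀ s ≤ t, N s ω = path s}] {ω | N (t + 1) ω = path t - 1}
            = ENNReal.ofReal (q (path t))) →
        -- holding steps
        (∀ (t : ℕ) (path : ℕ → ℕ),
          μ {ω | ∀ s ≤ t, N s ω = path s} ≠ 0 →
          μ[|{ω | ∀ s ≤ t, N s ω = path s}] {ω | N (t + 1) ω = path t}
            = ENNReal.ofReal (1 - p (path t) - q (path t))) →
        (n : ℝ≥0∞) ≤ ∫⁻ ω, extinctionTime N ω ∂μ ∧
          ∫⁻ ω, extinctionTime N ω ∂μ ≤ ENNReal.ofReal C' * n := by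
  refine ⟨Mconst C D, Mconst_pos hC hD, ?_⟩
  intro Ω inst μ hprob N p q n hN hp hq hpq hp0 hq0 hpC hqD hstart hb hd hh
  haveI := hprob
  -- the "bad" events where the chain jumps down by more than one
  set bad : ℕ → Set Ω := fun t => {ω | N (t + 1) ω + 1 < N t ω} with hbaddef
  have hbadmeas : ∀ t, MeasurableSet (bad t) := fun t =>
    measurableSet_lt ((hN (t + 1)).add measurable_const) (hN t)
  have hbadnull : ∀ t, μ (bad t) = 0 := by
    intro t
    rw [measure_cyl N hN μ t (bad t) (hbadmeas t)]
    refine ENNReal.tsum_eq_zero.2 fun v => ?_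
    by_cases hμA : μ (cyl N t v) = 0
    · exact measure_mono_null Set.inter_subset_left hμA
    by_cases hm : pathExt t v t = 0
    · have he : cyl N t v ∩ bad t = ∅ := by
        ext ω
        simp only [Set.mem_inter_iff, Set.mem_empty_iff_false, iff_false, not_and]
        intro hcyl hbad
        have h0 := mem_cyl_last hcyl
        rw [hm] at h0
        simp only [hbaddef, Set.mem_setOf_eq, h0] at hbad
        omega
      rw [he, measure_empty]
    · obtain ⟨_, _, _, hrest⟩ := cyl_step_measures hN hp hq hpq hb hd hh t v hμA
        (Nat.pos_of_ne_zero hm)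
      refine measure_mono_null ?_ hrest
      rintro ω ⟨hcyl, hbad⟩
      refine ⟨hcyl, ?_⟩
      have hNt : N t ω = pathExt t v t := mem_cyl_last hcyl
      simp only [hbaddef, Set.mem_setOf_eq, hNt] at hbad
      simp only [Set.mem_union, Set.mem_setOf_eq]
      omega
  constructor
  · -- lower bound
    set Gs : Set Ω := (⋃ t, bad t)ᶜ with hGsdef
    have hGm : MeasurableSet Gs := (MeasurableSet.iUnion hbadmeas).compl
    have hGone : μ Gs = 1 := by
      rw [hGsdef, prob_compl_eq_one_sub (MeasurableSet.iUnion hbadmeas),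
        measure_iUnion_null hbadnull]
      simp
    have hmono : ∀ ω ∈ Gs, ∀ t, n ≤ N t ω + t := by
      intro ω hω t
      have hng : ∀ t, ¬ (N (t + 1) ω + 1 < N t ω) := by
        intro t ht
        exact hω (Set.mem_iUnion.2 ⟨t, ht⟩)
      induction t with
      | zero => simp [hstart ω]
      | succ t iht => have := hng t; omega
    have hlow : ∀ ω, Gs.indicator (fun _ => (n : ℝ≥0∞)) ω ≤ extinctionTime N ω := by
      intro ω
      by_cases hω : ω ∈ Gs
      · rw [Set.indicator_of_mem hω]
        unfold extinctionTime
        refine le_iInf₂ fun t ht => ?_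
        have := hmono ω hω t
        rw [ht] at this
        exact_mod_cast Nat.cast_le.2 (by omega : n ≤ t)
      · rw [Set.indicator_of_notMem hω]; exact zero_le
    calc (n : ℝ≥0∞) = (n : ℝ≥0∞) * μ Gs := by rw [hGone, mul_one]
      _ = ∫⁻ ω, Gs.indicator (fun _ => (n : ℝ≥0∞)) ω ∂μ := by
          rw [lintegral_indicator hGm, setLIntegral_const]
      _ ≤ ∫⁻ ω, extinctionTime N ω ∂μ := lintegral_mono hlow
  · -- upper bound
    have hsup := supermartingale_bound hC hD hN hp hq hpq hp0 hq0 hpC hqD hb hd hh n hstart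
    have htsum : ∑' s : ℕ, μ {ω | N s ω ≠ 0} ≤ ENNReal.ofReal (ffun C D n) := by
      rw [ENNReal.tsum_eq_iSup_nat]
      exact iSup_le fun t => le_trans le_add_self (hsup t)
    have hmeas : ∀ s : ℕ, MeasurableSet {ω | N s ω ≠ 0} := fun s =>
      ((hN s) (measurableSet_singleton 0)).compl
    have hT_le : ∀ ω, extinctionTime N ω
        ≤ ∑' s : ℕ, Set.indicator {ω' | N s ω' ≠ 0} (fun _ => (1 : ℝ≥0∞)) ω := by
      intro ω
      by_cases h : ∃ t, N t ω = 0
      · refine le_trans ?_ (ENNReal.sum_le_tsum (Finset.range (Nat.find h)))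
        have hone : ∀ s ∈ Finset.range (Nat.find h),
            Set.indicator {ω' | N s ω' ≠ 0} (fun _ => (1 : ℝ≥0∞)) ω = 1 := fun s hs =>
          Set.indicator_of_mem (show ω ∈ {ω' | N s ω' ≠ 0} from
            Nat.find_min h (Finset.mem_range.1 hs)) _
        rw [Finset.sum_congr rfl hone, Finset.sum_const, Finset.card_range, nsmul_eq_mul,
          mul_one]
        show extinctionTime N ω ≤ ((Nat.find h : ℕ) : ℝ≥0∞)
        unfold extinctionTime
        exact iInf₂_le (f := fun (t : ℕ) (_ : N t ω = 0) => (t : ℝ≥0∞))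
          (Nat.find h) (Nat.find_spec h)
      · push_neg at h
        have : ∑' s : ℕ, Set.indicator {ω' | N s ω' ≠ 0} (fun _ => (1 : ℝ≥0∞)) ω = ⊤ := by
          rw [tsum_congr (fun s => Set.indicator_of_mem
            (show ω ∈ {ω' | N s ω' ≠ 0} from h s) (fun _ => (1 : ℝ≥0∞)))]
          exact ENNReal.tsum_const_eq_top_of_ne_zero one_ne_zero
        rw [this]
        exact le_top
    calc ∫⁻ ω, extinctionTime N ω ∂μ
        ≤ ∫⁻ ω, ∑' s : ℕ, Set.indicator {ω' | N s ω' ≠ 0} (fun _ => (1 : ℝ≥0∞)) ω ∂μ :=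
          lintegral_mono hT_le
      _ = ∑' s : ℕ, ∫⁻ ω, Set.indicator {ω' | N s ω' ≠ 0} (fun _ => (1 : ℝ≥0∞)) ω ∂μ :=
          lintegral_tsum fun s => (measurable_one.indicator (hmeas s)).aemeasurable
      _ = ∑' s : ℕ, μ {ω | N s ω ≠ 0} := by
          refine tsum_congr fun s => ?_
          rw [lintegral_indicator (hmeas s), setLIntegral_one]
      _ ≤ ENNReal.ofReal (ffun C D n) := htsum
      _ ≤ ENNReal.ofReal (Mconst C D * n) := ENNReal.ofReal_le_ofReal (ffun_le hC hD n)
      _ = ENNReal.ofReal (Mconst C D) * n := by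
          rw [ENNReal.ofReal_mul (Mconst_pos hC hD).le, ENNReal.ofReal_natCast]
end

section
/- For a nice birth-death chain started at state n, the expected number of birth events before absorption at 0 satisfies E[B(n)] = O(log n). -/
open MeasureTheory ProbabilityTheory
open scoped ENNReal

/-- Total number of birth (increment) steps of the process `N`. Since `0` is
absorbing and `p 0 = 0`, these are exactly the births before extinction. -/
noncomputable def birthCount {Ω : Type*} (N : ℕ → Ω → ℕ) (ω : Ω) : ℝ≥0∞ :=
  ∑' t : ℕ, if N (t + 1) ω = N t ω + 1 then 1 else 0

noncomputable def dd (C D : ℝ) (m : ℕ) : ℝ :=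
  if h : ⌈2*C/D⌉₊ ≤ m then (2*C/D)/m else (dd C D (m+1) + 1)/D
termination_by ⌈2*C/D⌉₊ - m
decreasing_by omega

lemma dd_of_ge {C D : ℝ} {m : ℕ} (h : ⌈2*C/D⌉₊ ≤ m) : dd C D m = (2*C/D)/m := by
  rw [dd]; simp [h]

lemma dd_of_lt {C D : ℝ} {m : ℕ} (h : m < ⌈2*C/D⌉₊) : dd C D m = (dd C D (m+1) + 1)/D := by
  rw [dd]; simp [Nat.not_le.2 h]

lemma dd_nonneg {C D : ℝ} (hC : 0 < C) (hD : 0 < D) (m : ℕ) : 0 ≤ dd C D m := by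
  have key : ∀ k m, ⌈2*C/D⌉₊ - m ≤ k → 0 ≤ dd C D m := by
    intro k
    induction k with
    | zero =>
      intro m hm
      rw [dd_of_ge (by omega)]
      positivity
    | succ k ih =>
      intro m hm
      by_cases h : ⌈2*C/D⌉₊ ≤ m
      · rw [dd_of_ge h]; positivity
      · rw [dd_of_lt (Nat.lt_of_not_le h)]
        have h2 := ih (m+1) (by omega)
        positivity
  exact key _ m le_rfl

lemma dd_key {C D : ℝ} (hC : 0 < C) (hD : 0 < D) (m : ℕ) (hm : 1 ≤ m) (pm qm : ℝ)
    (hp0 : 0 ≤ pm) (hpC : pm ≤ C/m) (hpq : pm + qm ≤ 1) (hq0 : 0 ≤ qm) (hqD : D ≤ qm) :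
    pm * (dd C D (m+1) + 1) ≤ qm * dd C D m := by
  by_cases h : ⌈2*C/D⌉₊ ≤ m
  · rw [dd_of_ge (by omega), dd_of_ge h]
    have ha : (2*C/D) ≤ (m:ℝ) + 1 := by
      have h1 : (2*C/D) ≤ (⌈2*C/D⌉₊ : ℝ) := Nat.le_ceil _
      have h2 : ((⌈2*C/D⌉₊ : ℕ) : ℝ) ≤ (m:ℝ) := by exact_mod_cast h
      linarith
    have hm1 : (0:ℝ) < (m:ℝ) := by exact_mod_cast hm
    have hfrac : (2*C/D)/((m:ℝ)+1) + 1 ≤ 2 := by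
      have : (2*C/D)/((m:ℝ)+1) ≤ 1 := by
        rw [div_le_one (by linarith)]; exact ha
      linarith
    have hfracpos : 0 ≤ (2*C/D)/((m:ℝ)+1) + 1 := by positivity
    have step1 : pm * ((2*C/D)/((m:ℝ)+1) + 1) ≤ (C/m) * 2 := by
      calc pm * ((2*C/D)/((m:ℝ)+1) + 1) ≤ (C/m) * ((2*C/D)/((m:ℝ)+1) + 1) := by
            apply mul_le_mul_of_nonneg_right hpC hfracpos
        _ ≤ (C/m) * 2 := by
            apply mul_le_mul_of_nonneg_left hfrac (by positivity)
    have step2 : (C/(m:ℝ)) * 2 = D * ((2*C/D)/m) := by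
      field_simp
    have step3 : D * ((2*C/D)/(m:ℝ)) ≤ qm * ((2*C/D)/m) := by
      apply mul_le_mul_of_nonneg_right hqD (by positivity)
    push_cast
    linarith
  · rw [dd_of_lt (Nat.lt_of_not_le h)]
    have hd := dd_nonneg hC hD (m+1)
    have hDd : D * ((dd C D (m+1) + 1)/D) = dd C D (m+1) + 1 := by field_simp
    have hp1 : pm ≤ 1 := by linarith
    have h1 : pm * (dd C D (m+1) + 1) ≤ dd C D (m+1) + 1 := by nlinarith
    have h2 : D * ((dd C D (m+1) + 1)/D) ≤ qm * ((dd C D (m+1) + 1)/D) := by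
      apply mul_le_mul_of_nonneg_right hqD (by positivity)
    linarith

noncomputable def hh (C D : ℝ) (m : ℕ) : ℝ := ∑ j ∈ Finset.range m, dd C D (j+1)

lemma hh_nonneg {C D : ℝ} (hC : 0 < C) (hD : 0 < D) (m : ℕ) : 0 ≤ hh C D m :=
  Finset.sum_nonneg fun j _ => dd_nonneg hC hD (j+1)

lemma hh_succ (C D : ℝ) (m : ℕ) : hh C D (m+1) = hh C D m + dd C D (m+1) :=
  Finset.sum_range_succ _ _

noncomputable def SS (C D : ℝ) : ℝ := ∑ j ∈ Finset.range (max ⌈2*C/D⌉₊ 2), dd C D (j+1)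

lemma SS_nonneg {C D : ℝ} (hC : 0 < C) (hD : 0 < D) : 0 ≤ SS C D :=
  Finset.sum_nonneg fun j _ => dd_nonneg hC hD (j+1)

lemma hh_log_bound {C D : ℝ} (hC : 0 < C) (hD : 0 < D) (n : ℕ) :
    hh C D n ≤ SS C D + (2*C/D) * Real.log n := by
  induction n with
  | zero => simp [hh, Real.log_zero]; exact SS_nonneg hC hD
  | succ n ih =>
    by_cases hK : n + 1 < max ⌈2*C/D⌉₊ 2
    · have h1 : hh C D (n+1) ≤ SS C D := by
        apply Finset.sum_le_sum_of_subset_of_nonneg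
        · exact Finset.range_subset_range.2 (by omega)
        · intro j _ _; exact dd_nonneg hC hD (j+1)
      have h2 : 0 ≤ Real.log (n+1) := by
        apply Real.log_nonneg; push_cast; linarith [Nat.cast_nonneg (α := ℝ) n]
      have : 0 ≤ (2*C/D) * Real.log (n+1) := by positivity
      push_cast at this ⊢
      linarith
    · push_neg at hK
      have hn1 : 1 ≤ n := by omega
      have hM : ⌈2*C/D⌉₊ ≤ n + 1 := le_trans (le_max_left _ _) hK
      rw [hh_succ, dd_of_ge hM]
      have hnR : (0:ℝ) < n := by exact_mod_cast hn1
      have hlog : (1:ℝ)/((n:ℝ)+1) ≤ Real.log (n+1) - Real.log n := by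
        have h1 : Real.log ((n:ℝ)/((n:ℝ)+1)) ≤ (n:ℝ)/((n:ℝ)+1) - 1 :=
          Real.log_le_sub_one_of_pos (by positivity)
        rw [Real.log_div (by positivity) (by positivity)] at h1
        have h2 : (n:ℝ)/((n:ℝ)+1) - 1 = -(1/((n:ℝ)+1)) := by field_simp; ring
        linarith
      have ha : 0 ≤ 2*C/D := by positivity
      have hstep : (2*C/D)/((n:ℝ)+1) ≤ (2*C/D) * (Real.log (n+1) - Real.log n) := by
        have := mul_le_mul_of_nonneg_left hlog ha
        rw [mul_one_div] at this
        linarith [this]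
      push_cast at ih hstep ⊢
      nlinarith

lemma hh_c_log {C D : ℝ} (hC : 0 < C) (hD : 0 < D) {n : ℕ} (hn : 2 ≤ n) :
    hh C D n ≤ (SS C D / Real.log 2 + 2*C/D) * Real.log n := by
  have hlog2 : 0 < Real.log 2 := Real.log_pos (by norm_num)
  have hlogn : Real.log 2 ≤ Real.log n := by
    apply Real.log_le_log (by norm_num)
    exact_mod_cast hn
  have hS := SS_nonneg hC hD
  have h1 := hh_log_bound hC hD n
  have h2 : SS C D ≤ SS C D / Real.log 2 * Real.log n := by
    rw [div_mul_eq_mul_div, le_div_iff₀ hlog2]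
    nlinarith
  nlinarith


def pext (t : ℕ) (v : Fin (t+1) → ℕ) (s : ℕ) : ℕ :=
  v ⟨min s t, Nat.lt_succ_of_le (min_le_right s t)⟩

lemma pext_eq (t : ℕ) (v : Fin (t+1) → ℕ) (s : Fin (t+1)) : pext t v s.val = v s := by
  unfold pext
  congr 1
  exact Fin.ext (Nat.min_eq_left (Nat.lt_succ_iff.mp s.isLt))

lemma pext_last (t : ℕ) (v : Fin (t+1) → ℕ) : pext t v t = v ⟨t, Nat.lt_succ_self t⟩ :=
  pext_eq t v ⟨t, Nat.lt_succ_self t⟩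


lemma step_lemma (C D : ℝ) (hC : 0 < C) (hD : 0 < D)
    {Ω : Type} [MeasurableSpace Ω] (μ : Measure Ω) [IsProbabilityMeasure μ]
    (N : ℕ → Ω → ℕ) (p q : ℕ → ℝ)
    (hN : ∀ t, Measurable (N t))
    (hp0 : ∀ m, 0 ≤ p m) (hq0 : ∀ m, 0 ≤ q m) (hpq : ∀ m, p m + q m ≤ 1)
    (hp00 : p 0 = 0) (hq00 : q 0 = 0)
    (hpC : ∀ m : ℕ, 0 < m → p m ≤ C / m) (hqD : ∀ m : ℕ, 0 < m → D ≤ q m)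
    (hbirth : ∀ (t : ℕ) (path : ℕ → ℕ),
      μ {ω | ∀ s ≤ t, N s ω = path s} ≠ 0 →
      μ[|{ω | ∀ s ≤ t, N s ω = path s}] {ω | N (t + 1) ω = path t + 1}
        = ENNReal.ofReal (p (path t)))
    (hdeath : ∀ (t : ℕ) (path : ℕ → ℕ), 0 < path t →
      μ {ω | ∀ s ≤ t, N s ω = path s} ≠ 0 →
      μ[|{ω | ∀ s ≤ t, N s ω = path s}] {ω | N (t + 1) ω = path t - 1}
        = ENNReal.ofReal (q (path t)))
    (hhold : ∀ (t : ℕ) (path : ℕ → ℕ),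
      μ {ω | ∀ s ≤ t, N s ω = path s} ≠ 0 →
      μ[|{ω | ∀ s ≤ t, N s ω = path s}] {ω | N (t + 1) ω = path t}
        = ENNReal.ofReal (1 - p (path t) - q (path t)))
    (t : ℕ) :
    (∫⁻ ω, ENNReal.ofReal (hh C D (N (t+1) ω)) ∂μ)
      + μ {ω | N (t+1) ω = N t ω + 1}
    ≤ ∫⁻ ω, ENNReal.ofReal (hh C D (N t ω)) ∂μ := by
  classical
  set H : ℕ → ℝ≥0∞ := fun m => ENNReal.ofReal (hh C D m) with hH
  set A : (Fin (t+1) → ℕ) → Set Ω := fun v => {ω | ∀ s ≤ t, N s ω = pext t v s} with hA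
  have hjset : ∀ u j, MeasurableSet {ω | N u ω = j} := fun u j =>
    hN u (measurableSet_singleton j)
  have hAmeas : ∀ v, MeasurableSet (A v) := by
    intro v
    have : A v = ⋂ (s : ℕ) (_ : s ≤ t), {ω | N s ω = pext t v s} := by
      ext ω; simp [hA, Set.mem_iInter]
    rw [this]
    exact MeasurableSet.biInter (Set.to_countable _) fun s _ => hjset s _
  have hdisj : Pairwise (Function.onFun Disjoint A) := by
    intro v w hvw
    rw [Function.onFun, Set.disjoint_left]
    intro ω hv hw
    apply hvw
    funext s
    have h1 := hv s.val (Nat.lt_succ_iff.mp s.isLt)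
    have h2 := hw s.val (Nat.lt_succ_iff.mp s.isLt)
    rw [pext_eq] at h1 h2
    rw [← h1, ← h2]
  have hcover : (⋃ v, A v) = Set.univ := by
    ext ω
    simp only [Set.mem_iUnion, Set.mem_univ, iff_true]
    refine ⟨fun s => N s.val ω, fun s hs => ?_⟩
    show N s ω = N (min s t) ω
    rw [Nat.min_eq_left hs]
  have hSmeas : MeasurableSet {ω | N (t+1) ω = N t ω + 1} := by
    have : {ω | N (t+1) ω = N t ω + 1}
        = ⋃ k : ℕ, ({ω | N t ω = k} ∩ {ω | N (t+1) ω = k + 1}) := by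
      ext ω
      simp only [Set.mem_setOf_eq, Set.mem_iUnion, Set.mem_inter_iff]
      exact ⟨fun h => ⟨N t ω, rfl, h⟩, fun ⟨k, h1, h2⟩ => by rw [h1]; exact h2⟩
    rw [this]
    exact MeasurableSet.iUnion fun k => (hjset t k).inter (hjset (t+1) (k+1))
  have hdecomp : ∀ (f : Ω → ℝ≥0∞), (∫⁻ ω, f ω ∂μ) = ∑' v, ∫⁻ ω in A v, f ω ∂μ := by
    intro f
    rw [← setLIntegral_univ, ← hcover, lintegral_iUnion hAmeas hdisj]
  have hμS : μ {ω | N (t+1) ω = N t ω + 1}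
      = ∑' v, μ (A v ∩ {ω | N (t+1) ω = N t ω + 1}) := by
    have h1 : {ω | N (t+1) ω = N t ω + 1}
        = ⋃ v, (A v ∩ {ω | N (t+1) ω = N t ω + 1}) := by
      rw [← Set.iUnion_inter, hcover, Set.univ_inter]
    conv_lhs => rw [h1]
    rw [measure_iUnion
      (fun i j hij => ((hdisj hij).mono Set.inter_subset_left Set.inter_subset_left))
      (fun v => (hAmeas v).inter hSmeas)]
  rw [hdecomp, hdecomp, hμS, ← ENNReal.tsum_add]
  apply ENNReal.tsum_le_tsum
  intro v
  -- per-path inequality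
  set m : ℕ := pext t v t with hm
  have hR : (∫⁻ ω in A v, H (N t ω) ∂μ) = H m * μ (A v) := by
    rw [setLIntegral_congr_fun (hAmeas v)
      (fun ω hω => by rw [hω t le_rfl]),
      setLIntegral_const]
  have hL : (∫⁻ ω in A v, H (N (t+1) ω) ∂μ)
      = ∑' j, H j * μ (A v ∩ {ω | N (t+1) ω = j}) := by
    have h1 : ∀ ω, H (N (t+1) ω)
        = ∑' j : ℕ, Set.indicator {ω' | N (t+1) ω' = j} (fun _ => H j) ω := by
      intro ω
      rw [tsum_eq_single (N (t+1) ω) ?_]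
      · simp [Set.indicator_apply]
      · intro j hj
        simp only [Set.indicator_apply, Set.mem_setOf_eq]
        rw [if_neg (fun h => hj h.symm)]
    calc (∫⁻ ω in A v, H (N (t+1) ω) ∂μ)
        = ∫⁻ ω in A v, (∑' j : ℕ, Set.indicator {ω' | N (t+1) ω' = j} (fun _ => H j) ω) ∂μ :=
          lintegral_congr h1
      _ = ∑' j, ∫⁻ ω in A v, Set.indicator {ω' | N (t+1) ω' = j} (fun _ => H j) ω ∂μ :=
          lintegral_tsum fun j => (measurable_const.indicator (hjset (t+1) j)).aemeasurable
      _ = ∑' j, H j * μ (A v ∩ {ω | N (t+1) ω = j}) := by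
          apply tsum_congr
          intro j
          rw [lintegral_indicator (hjset (t+1) j), setLIntegral_const,
            Measure.restrict_apply (hjset (t+1) j), Set.inter_comm]
  rw [hR, hL]
  have hSB : A v ∩ {ω | N (t+1) ω = N t ω + 1} = A v ∩ {ω | N (t+1) ω = m + 1} := by
    ext ω
    simp only [Set.mem_inter_iff, Set.mem_setOf_eq]
    constructor
    · rintro ⟨ha, h2⟩; exact ⟨ha, by rw [h2, ha t le_rfl]⟩
    · rintro ⟨ha, h2⟩; exact ⟨ha, by rw [h2, ha t le_rfl]⟩
  rw [hSB]
  by_cases hA0 : μ (A v) = 0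
  · have hz : ∀ (B : Set Ω), μ (A v ∩ B) = 0 := fun B =>
      measure_mono_null Set.inter_subset_left hA0
    simp only [hz, mul_zero, tsum_zero, zero_add, add_zero]
    exact zero_le
  · have hAtop : μ (A v) ≠ ∞ := measure_ne_top μ _
    have hcond : ∀ (B : Set Ω) (r : ℝ), μ[|A v] B = ENNReal.ofReal r →
        μ (A v ∩ B) = μ (A v) * ENNReal.ofReal r := by
      intro B r hB
      rw [cond_apply (hAmeas v)] at hB
      calc μ (A v ∩ B) = (μ (A v) * (μ (A v))⁻¹) * μ (A v ∩ B) := by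
            rw [ENNReal.mul_inv_cancel hA0 hAtop, one_mul]
        _ = μ (A v) * ((μ (A v))⁻¹ * μ (A v ∩ B)) := by ring
        _ = μ (A v) * ENNReal.ofReal r := by rw [hB]
    have hb : μ (A v ∩ {ω | N (t+1) ω = m + 1}) = μ (A v) * ENNReal.ofReal (p m) :=
      hcond _ _ (hbirth t (pext t v) hA0)
    have hha : μ (A v ∩ {ω | N (t+1) ω = m}) = μ (A v) * ENNReal.ofReal (1 - p m - q m) :=
      hcond _ _ (hhold t (pext t v) hA0)
    rcases Nat.eq_zero_or_pos m with hm0 | hm1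
    · -- absorbed case
      rw [hm0] at hb hha ⊢
      rw [hp00] at hb
      rw [hp00, hq00] at hha
      simp only [ENNReal.ofReal_zero, mul_zero] at hb
      norm_num at hha
      -- null for j ≠ 0
      have hnull : ∀ j : ℕ, j ≠ 0 → μ (A v ∩ {ω | N (t+1) ω = j}) = 0 := by
        intro j hj
        have hsub : A v ∩ {ω | N (t+1) ω = j} ⊆ A v \ {ω | N (t+1) ω = 0} := by
          rintro ω ⟨h1, h2⟩
          exact ⟨h1, fun h3 => hj (by rw [← h2, h3])⟩
        apply measure_mono_null hsub
        have hiad := measure_inter_add_diff (μ := μ) (A v) (hjset (t+1) 0)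
        rw [hha] at hiad
        have : μ (A v) + μ (A v \ {ω | N (t+1) ω = 0}) = μ (A v) + 0 := by
          rw [add_zero, hiad]
        exact (ENNReal.add_right_inj hAtop).mp this
      have htz : ∀ j : ℕ, H j * μ (A v ∩ {ω | N (t+1) ω = j}) = 0 := by
        intro j
        rcases Nat.eq_zero_or_pos j with hj0 | hj1
        · rw [hj0]
          have : H 0 = 0 := by simp [hH, hh]
          rw [this, zero_mul]
        · rw [hnull j (by omega), mul_zero]
      rw [tsum_congr htz, tsum_zero, hb]
      simp
    · have hd : μ (A v ∩ {ω | N (t+1) ω = m - 1}) = μ (A v) * ENNReal.ofReal (q m) :=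
        hcond _ _ (hdeath t (pext t v) hm1 hA0)
      -- total mass identity
      have hsum3 : μ (A v ∩ {ω | N (t+1) ω = m - 1}) + μ (A v ∩ {ω | N (t+1) ω = m})
          + μ (A v ∩ {ω | N (t+1) ω = m + 1}) = μ (A v) := by
        rw [hb, hd, hha, ← mul_add, ← mul_add,
          ← ENNReal.ofReal_add (hq0 m) (by linarith [hpq m, hp0 m]),
          ← ENNReal.ofReal_add (by linarith [hpq m, hp0 m, hq0 m]) (hp0 m)]
        norm_num
      set U : Set Ω := {ω | N (t+1) ω = m - 1} ∪ {ω | N (t+1) ω = m}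
        ∪ {ω | N (t+1) ω = m + 1} with hU
      have hUmeas : MeasurableSet U :=
        ((hjset (t+1) (m-1)).union (hjset (t+1) m)).union (hjset (t+1) (m+1))
      have hAU : μ (A v ∩ U) = μ (A v) := by
        rw [hU, Set.inter_union_distrib_left, Set.inter_union_distrib_left,
          measure_union ?_ ((hAmeas v).inter (hjset (t+1) (m+1))),
          measure_union ?_ ((hAmeas v).inter (hjset (t+1) m))]
        · rw [add_assoc] at hsum3 ⊢
          exact hsum3
        · rw [Set.disjoint_left]
          rintro ω ⟨_, h1⟩ ⟨_, h2⟩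
          simp only [Set.mem_setOf_eq] at h1 h2
          omega
        · rw [Set.disjoint_left]
          rintro ω hω ⟨_, h2⟩
          simp only [Set.mem_setOf_eq] at h2
          rcases hω with ⟨_, h1⟩ | ⟨_, h1⟩ <;> simp only [Set.mem_setOf_eq] at h1 <;> omega
      have hnull : ∀ j : ℕ, j ≠ m - 1 → j ≠ m → j ≠ m + 1 →
          μ (A v ∩ {ω | N (t+1) ω = j}) = 0 := by
        intro j h1 h2 h3
        have hsub : A v ∩ {ω | N (t+1) ω = j} ⊆ A v \ U := by
          rintro ω ⟨ha, hj⟩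
          simp only [Set.mem_setOf_eq] at hj
          refine ⟨ha, fun hu => ?_⟩
          rw [hU] at hu
          rcases hu with (hx | hx) | hx <;> simp only [Set.mem_setOf_eq] at hx <;> omega
        apply measure_mono_null hsub
        have hiad := measure_inter_add_diff (μ := μ) (A v) hUmeas
        rw [hAU] at hiad
        have : μ (A v) + μ (A v \ U) = μ (A v) + 0 := by rw [add_zero, hiad]
        exact (ENNReal.add_right_inj hAtop).mp this
      have htsum : (∑' j, H j * μ (A v ∩ {ω | N (t+1) ω = j}))
          = H (m-1) * μ (A v ∩ {ω | N (t+1) ω = m - 1})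
            + H m * μ (A v ∩ {ω | N (t+1) ω = m})
            + H (m+1) * μ (A v ∩ {ω | N (t+1) ω = m + 1}) := by
        rw [tsum_eq_sum (s := ({m - 1, m, m + 1} : Finset ℕ)) ?_]
        · rw [Finset.sum_insert (by simp only [Finset.mem_insert, Finset.mem_singleton]; omega),
            Finset.sum_insert (by simp only [Finset.mem_singleton]; omega),
            Finset.sum_singleton, add_assoc]
        · intro j hj
          simp only [Finset.mem_insert, Finset.mem_singleton, not_or] at hj
          rw [hnull j hj.1 hj.2.1 hj.2.2, mul_zero]
      rw [htsum, hb, hd, hha]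
      -- key real inequality
      have hmR : (0:ℝ) < (m:ℝ) := by exact_mod_cast hm1
      have hkey := dd_key hC hD m hm1 (p m) (q m) (hp0 m) (hpC m hm1) (hpq m)
        (hq0 m) (hqD m hm1)
      have hhm1 : hh C D m = hh C D (m-1) + dd C D m := by
        have h2 : m - 1 + 1 = m := by omega
        have := hh_succ C D (m-1)
        rw [h2] at this
        exact this
      have hhm2 : hh C D (m+1) = hh C D m + dd C D (m+1) := hh_succ C D m
      have hreal : hh C D (m-1) * q m + hh C D m * (1 - p m - q m)
          + hh C D (m+1) * p m + p m ≤ hh C D m := by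
        rw [hhm2, hhm1]
        nlinarith [hkey]
      have hQ : H (m-1) * ENNReal.ofReal (q m) + H m * ENNReal.ofReal (1 - p m - q m)
          + H (m+1) * ENNReal.ofReal (p m) + ENNReal.ofReal (p m) ≤ H m := by
        have hn1 := hh_nonneg hC hD (m-1)
        have hn2 := hh_nonneg hC hD m
        have hn3 := hh_nonneg hC hD (m+1)
        have h1mpq : (0:ℝ) ≤ 1 - p m - q m := by linarith [hpq m, hp0 m, hq0 m]
        have w1 : 0 ≤ hh C D (m-1) * q m := mul_nonneg hn1 (hq0 m)
        have w2 : 0 ≤ hh C D m * (1 - p m - q m) := mul_nonneg hn2 h1mpq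
        have w3 : 0 ≤ hh C D (m+1) * p m := mul_nonneg hn3 (hp0 m)
        rw [hH]
        simp only []
        rw [← ENNReal.ofReal_mul hn1, ← ENNReal.ofReal_mul hn2, ← ENNReal.ofReal_mul hn3,
          ← ENNReal.ofReal_add w1 w2, ← ENNReal.ofReal_add (add_nonneg w1 w2) w3,
          ← ENNReal.ofReal_add (add_nonneg (add_nonneg w1 w2) w3) (hp0 m)]
        exact ENNReal.ofReal_le_ofReal hreal
      calc H (m-1) * (μ (A v) * ENNReal.ofReal (q m))
            + H m * (μ (A v) * ENNReal.ofReal (1 - p m - q m))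
            + H (m+1) * (μ (A v) * ENNReal.ofReal (p m))
            + μ (A v) * ENNReal.ofReal (p m)
          = (H (m-1) * ENNReal.ofReal (q m) + H m * ENNReal.ofReal (1 - p m - q m)
            + H (m+1) * ENNReal.ofReal (p m) + ENNReal.ofReal (p m)) * μ (A v) := by ring
        _ ≤ H m * μ (A v) := by gcongr

/-- For a nice birth-death chain started at `n`, the expected number of births before
absorption at `0` is `O(log n)`: there is a constant `c` depending only on `C, D`
with `E[B(n)] ≤ c·log n` for all `n ≥ 2`. -/
theorem stmt_6 (C D : ℝ) (hC : 0 < C) (hD : 0 < D) :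
    ∃ c : ℝ, 0 < c ∧
      ∀ n : ℕ, 2 ≤ n →
      ∀ (Ω : Type) (_ : MeasurableSpace Ω) (μ : Measure Ω), IsProbabilityMeasure μ →
      ∀ (N : ℕ → Ω → ℕ) (p q : ℕ → ℝ),
        (∀ t, Measurable (N t)) →
        (∀ m, 0 ≤ p m) → (∀ m, 0 ≤ q m) → (∀ m, p m + q m ≤ 1) →
        p 0 = 0 → q 0 = 0 →
        (∀ m : ℕ, 0 < m → p m ≤ C / m) →
        (∀ m : ℕ, 0 < m → D ≤ q m) →
        (∀ ω, N 0 ω = n) →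
        -- birth transitions, conditionally on any past trajectory
        (∀ (t : ℕ) (path : ℕ → ℕ),
          μ {ω | ∀ s ≤ t, N s ω = path s} ≠ 0 →
          μ[|{ω | ∀ s ≤ t, N s ω = path s}] {ω | N (t + 1) ω = path t + 1}
            = ENNReal.ofReal (p (path t))) →
        -- death transitions
        (∀ (t : ℕ) (path : ℕ → ℕ), 0 < path t →
          μ {ω | ∀ s ≤ t, N s ω = path s} ≠ 0 →
          μ[|{ω | ∀ s ≤ t, N s ω = path s}] {ω | N (t + 1) ω = path t - 1}
            = ENNReal.ofReal (q (path t))) →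
        -- holding steps
        (∀ (t : ℕ) (path : ℕ → ℕ),
          μ {ω | ∀ s ≤ t, N s ω = path s} ≠ 0 →
          μ[|{ω | ∀ s ≤ t, N s ω = path s}] {ω | N (t + 1) ω = path t}
            = ENNReal.ofReal (1 - p (path t) - q (path t))) →
        ∫⁻ ω, birthCount N ω ∂μ ≤ ENNReal.ofReal (c * Real.log n) := by
  have hl2 : 0 < Real.log 2 := Real.log_pos (by norm_num)
  have hS := SS_nonneg hC hD
  refine ⟨SS C D / Real.log 2 + 2*C/D, by positivity, ?_⟩
  intro n hn Ω mΩ μ hμ N p q hN hp0 hq0 hpq hp00 hq00 hpC hqD hN0 hbirth hdeath hhold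
  haveI := hμ
  have hjset : ∀ u j, MeasurableSet {ω | N u ω = j} := fun u j =>
    hN u (measurableSet_singleton j)
  have hSmeas : ∀ t : ℕ, MeasurableSet {ω | N (t+1) ω = N t ω + 1} := by
    intro t
    have : {ω | N (t+1) ω = N t ω + 1}
        = ⋃ k : ℕ, ({ω | N t ω = k} ∩ {ω | N (t+1) ω = k + 1}) := by
      ext ω
      simp only [Set.mem_setOf_eq, Set.mem_iUnion, Set.mem_inter_iff]
      exact ⟨fun h => ⟨N t ω, rfl, h⟩, fun ⟨k, h1, h2⟩ => by rw [h1]; exact h2⟩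
    rw [this]
    exact MeasurableSet.iUnion fun k => (hjset t k).inter (hjset (t+1) (k+1))
  have h1 : (∫⁻ ω, birthCount N ω ∂μ) = ∑' t, μ {ω | N (t+1) ω = N t ω + 1} := by
    unfold birthCount
    have hrw : ∀ t : ℕ, (fun ω => (if N (t+1) ω = N t ω + 1 then (1:ℝ≥0∞) else 0))
        = Set.indicator {ω | N (t+1) ω = N t ω + 1} (fun _ => (1:ℝ≥0∞)) := by
      intro t
      funext ω
      by_cases h : N (t+1) ω = N t ω + 1 <;>
        simp [Set.indicator_apply, Set.mem_setOf_eq, h]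
    calc (∫⁻ ω, ∑' t : ℕ, if N (t + 1) ω = N t ω + 1 then (1:ℝ≥0∞) else 0 ∂μ)
        = ∑' t : ℕ, ∫⁻ ω, (if N (t + 1) ω = N t ω + 1 then (1:ℝ≥0∞) else 0) ∂μ := by
          apply lintegral_tsum
          intro t
          rw [show (fun ω => (if N (t+1) ω = N t ω + 1 then (1:ℝ≥0∞) else 0)) = _ from hrw t]
          exact (measurable_const.indicator (hSmeas t)).aemeasurable
      _ = ∑' t, μ {ω | N (t+1) ω = N t ω + 1} := by
          apply tsum_congr
          intro t
          rw [show (fun ω => (if N (t+1) ω = N t ω + 1 then (1:ℝ≥0∞) else 0)) = _ from hrw t]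
          exact lintegral_indicator_one (hSmeas t)
  have h2 : ∀ T : ℕ, (∑ t ∈ Finset.range T, μ {ω | N (t+1) ω = N t ω + 1})
      + (∫⁻ ω, ENNReal.ofReal (hh C D (N T ω)) ∂μ) ≤ ENNReal.ofReal (hh C D n) := by
    intro T
    induction T with
    | zero =>
      simp only [Finset.range_zero, Finset.sum_empty, zero_add]
      have : (∫⁻ ω, ENNReal.ofReal (hh C D (N 0 ω)) ∂μ) = ENNReal.ofReal (hh C D n) := by
        rw [lintegral_congr (fun ω => by rw [hN0 ω]), lintegral_const, measure_univ, mul_one]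
      exact le_of_eq this
    | succ T ih =>
      rw [Finset.sum_range_succ]
      calc (∑ t ∈ Finset.range T, μ {ω | N (t+1) ω = N t ω + 1})
            + μ {ω | N (T+1) ω = N T ω + 1}
            + (∫⁻ ω, ENNReal.ofReal (hh C D (N (T+1) ω)) ∂μ)
          = (∑ t ∈ Finset.range T, μ {ω | N (t+1) ω = N t ω + 1})
            + ((∫⁻ ω, ENNReal.ofReal (hh C D (N (T+1) ω)) ∂μ)
              + μ {ω | N (T+1) ω = N T ω + 1}) := by ring
        _ ≤ (∑ t ∈ Finset.range T, μ {ω | N (t+1) ω = N t ω + 1})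
            + (∫⁻ ω, ENNReal.ofReal (hh C D (N T ω)) ∂μ) := by
            exact add_le_add_right (step_lemma C D hC hD μ N p q hN hp0 hq0 hpq hp00 hq00
              hpC hqD hbirth hdeath hhold T) _
        _ ≤ ENNReal.ofReal (hh C D n) := ih
  have h3 : (∑' t, μ {ω | N (t+1) ω = N t ω + 1}) ≤ ENNReal.ofReal (hh C D n) := by
    rw [ENNReal.tsum_eq_iSup_nat]
    exact iSup_le fun T => le_trans le_self_add (h2 T)
  rw [h1]
  refine le_trans h3 (ENNReal.ofReal_le_ofReal ?_)
  exact hh_c_log hC hD hn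
end

section
/- For a nice birth-death chain started at state n and any constant k > 0, there exists a constant C(k) such that the number of births before extinction satisfies Pr[B(n) ≥ C(k)·(log n)^2] ≤ 1/n^k for all sufficiently large n. -/
open MeasureTheory ProbabilityTheory
open scoped ENNReal

namespace Stmt8Aux

noncomputable def gg (E : ℝ) (m₁ m : ℕ) : ℝ := (E/2)^(min m m₁)
noncomputable def ff (E : ℝ) (m₁ : ℕ) (m : ℕ) : ℝ :=
  1 + ∑ j ∈ Finset.range m, gg E m₁ (j+1)

variable {E : ℝ} {m₁ : ℕ}

lemma gg_pos (hE : 0 < E) (m : ℕ) : 0 < gg E m₁ m := pow_pos (by linarith) _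
lemma ff_succ (m : ℕ) : ff E m₁ (m+1) = ff E m₁ m + gg E m₁ (m+1) := by
  simp [ff, Finset.sum_range_succ, add_assoc]
lemma ff_one_le (hE : 0 < E) (m : ℕ) : 1 ≤ ff E m₁ m := by
  have : 0 ≤ ∑ j ∈ Finset.range m, gg E m₁ (j+1) :=
    Finset.sum_nonneg fun j _ => (gg_pos hE _).le
  simp [ff]; linarith
lemma ff_le (hE : 0 < E) (hE1 : E ≤ 1) (hm₁ : 1 ≤ m₁) (m : ℕ) :
    ff E m₁ m ≤ 1 + m/2 := by
  have hterm : ∀ j ∈ Finset.range m, gg E m₁ (j+1) ≤ 1/2 := by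
    intro j _
    have h0 : (0:ℝ) < E/2 := by linarith
    have hmin : 1 ≤ min (j+1) m₁ := le_min (Nat.succ_le_succ (Nat.zero_le _)) hm₁
    calc gg E m₁ (j+1) ≤ (E/2)^1 := pow_le_pow_of_le_one h0.le (by linarith) hmin
      _ ≤ 1/2 := by simpa using (by linarith : E/2 ≤ 1/2)
  have := Finset.sum_le_sum hterm
  simp only [ff, Finset.sum_const, Finset.card_range, nsmul_eq_mul] at this ⊢
  linarith

set_option maxHeartbeats 1000000 in
/-- The one-step Lyapunov inequality at state `m+1`. -/
lemma core (hE : 0 < E) (hE1 : E ≤ 1) (K : ℝ) (hK : 1 ≤ K) (hm₁ : 1 ≤ m₁)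
    (hm₁K : 8*K ≤ E * m₁) (ε : ℝ) (hε0 : 0 < ε)
    (hεle : ε ≤ (E/2)^(m₁+2) / ((m₁+3)*K))
    (m : ℕ) (p q : ℝ) (hp0 : 0 ≤ p) (hpK : p ≤ K/(m+1)) (hp1 : p ≤ 1)
    (hq : E ≤ q) :
    p * ((1+ε) * ff E m₁ (m+2)) + q * ff E m₁ m + (1-p-q) * ff E m₁ (m+1)
      ≤ ff E m₁ (m+1) := by
  have hE2 : (0:ℝ) < E/2 := by linarith
  have hm1R : (1:ℝ) ≤ (m₁:ℝ) := by exact_mod_cast hm₁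
  have h2f : ff E m₁ (m+2) = ff E m₁ (m+1) + gg E m₁ (m+2) := ff_succ _
  have h1f : ff E m₁ (m+1) = ff E m₁ m + gg E m₁ (m+1) := ff_succ _
  set g1 := gg E m₁ (m+1) with hg1
  set g2 := gg E m₁ (m+2) with hg2
  have hg1pos : 0 < g1 := gg_pos hE _
  have hg2pos : 0 < g2 := gg_pos hE _
  clear_value g1 g2
  have hden : (0:ℝ) < ((m₁:ℝ)+3)*K := by positivity
  -- it suffices to show the drift inequality
  suffices h : p * (ε * ff E m₁ (m+1) + (1+ε) * g2) ≤ E * g1 by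
    have hq1 : E * g1 ≤ q * g1 := mul_le_mul_of_nonneg_right hq hg1pos.le
    have hmm : ff E m₁ m = ff E m₁ (m+1) - g1 := by linarith
    rw [h2f, hmm]
    nlinarith [h, hq1]
  have hεK : ε * (((m₁:ℝ)+3)*K) ≤ (E/2)^(m₁+2) := by
    rw [div_eq_mul_inv] at hεle
    calc ε * (((m₁:ℝ)+3)*K) ≤ ((E/2)^(m₁+2) * (((m₁:ℝ)+3)*K)⁻¹) * (((m₁:ℝ)+3)*K) :=
          mul_le_mul_of_nonneg_right hεle hden.le
      _ = (E/2)^(m₁+2) := by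
          rw [mul_assoc, inv_mul_cancel₀ hden.ne', mul_one]
  have hεsmall : ε ≤ 1/2 := by
    have h1 : (E/2)^(m₁+2) ≤ (1/2:ℝ)^(m₁+2) :=
      pow_le_pow_left₀ hE2.le (by linarith) _
    have h2 : (1/2:ℝ)^(m₁+2) ≤ (1/2:ℝ)^1 :=
      pow_le_pow_of_le_one (by norm_num) (by norm_num) (by omega)
    have h4 : (1:ℝ) ≤ ((m₁:ℝ)+3)*K := by nlinarith
    have h3 := mul_le_mul_of_nonneg_left h4 hε0.le
    simp only [mul_one] at h3
    nlinarith
  have hffle : ff E m₁ (m+1) ≤ 1 + ((m:ℝ)+1)/2 := by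
    have := ff_le hE hE1 hm₁ (m+1); push_cast at this; linarith
  have hffpos : (1:ℝ) ≤ ff E m₁ (m+1) := ff_one_le hE _
  rcases lt_or_ge (m+1) m₁ with hcase | hcase
  · -- small regime: m+2 ≤ m₁, use p ≤ 1
    have e1 : g1 = (E/2)^(m+1) := by rw [hg1, gg, min_eq_left (by omega)]
    have e2 : g2 = (E/2)^(m+2) := by rw [hg2, gg, min_eq_left (by omega)]
    have hg21 : g2 = (E/2) * g1 := by rw [e1, e2, pow_succ, mul_comm]
    have hle1 : ff E m₁ (m+1) ≤ ((m₁:ℝ)+3)/2 := by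
      have : ((m:ℝ)+1) ≤ m₁ := by exact_mod_cast hcase.le
      linarith
    have hpowle : (E/2)^(m₁+2) ≤ (E/2) * g1 := by
      rw [e1, ← pow_succ']
      exact pow_le_pow_of_le_one hE2.le (by linarith) (by omega)
    have hεff : ε * ff E m₁ (m+1) ≤ (E/4) * g1 := by
      have s1 : ε * ff E m₁ (m+1) ≤ ε * (((m₁:ℝ)+3)/2) :=
        mul_le_mul_of_nonneg_left hle1 hε0.le
      have s2 : ε * ((m₁:ℝ)+3) ≤ ε * (((m₁:ℝ)+3)*K) :=
        mul_le_mul_of_nonneg_left (le_mul_of_one_le_right (by positivity) hK) hε0.le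
      linarith
    have hterm2 : (1+ε) * g2 ≤ (3*E/4) * g1 := by
      rw [hg21]
      have hint : 0 ≤ (E*g1) * (1/2 - ε) :=
        mul_nonneg (mul_nonneg hE.le hg1pos.le) (by linarith)
      linarith [hint]
    have hX0 : (0:ℝ) ≤ ε * ff E m₁ (m+1) + (1+ε) * g2 :=
      add_nonneg (mul_nonneg hε0.le (by linarith)) (mul_nonneg (by linarith) hg2pos.le)
    have hfin : p * (ε * ff E m₁ (m+1) + (1+ε) * g2)
        ≤ 1 * (ε * ff E m₁ (m+1) + (1+ε) * g2) :=
      mul_le_mul_of_nonneg_right hp1 hX0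
    linarith [hfin, hεff, hterm2]
  · -- large regime: m₁ ≤ m+1, use p ≤ K/(m+1)
    have e1 : g1 = (E/2)^m₁ := by rw [hg1, gg, min_eq_right (by omega)]
    have e2 : g2 = (E/2)^m₁ := by rw [hg2, gg, min_eq_right (by omega)]
    have hm1pos : (0:ℝ) < m₁ := by linarith
    have hmpos : (0:ℝ) < (m:ℝ)+1 := by positivity
    have hm₁le : (m₁:ℝ) ≤ (m:ℝ)+1 := by exact_mod_cast hcase
    have hpE : p ≤ E/8 := by
      have h1 : K/((m:ℝ)+1) ≤ K/m₁ :=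
        div_le_div_of_nonneg_left (by linarith) hm1pos hm₁le
      have h2 : K/(m₁:ℝ) ≤ E/8 := by
        rw [div_le_div_iff₀ hm1pos (by norm_num)]
        linarith
      linarith
    have hpff : p * ff E m₁ (m+1) ≤ (3/2) * K := by
      have h1 : p * ff E m₁ (m+1) ≤ (K/((m:ℝ)+1)) * (1 + ((m:ℝ)+1)/2) :=
        mul_le_mul hpK hffle (by linarith) (by positivity)
      have h2 : (K/((m:ℝ)+1)) * (1 + ((m:ℝ)+1)/2) = K/((m:ℝ)+1) + K/2 := by
        field_simp
      have h3 : K/((m:ℝ)+1) ≤ K := by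
        rw [div_le_iff₀ hmpos]
        exact le_mul_of_one_le_right (by linarith) (by linarith)
      linarith
    have hεterm : p * (ε * ff E m₁ (m+1)) ≤ (3*E/32) * g1 := by
      have h1 : ε * (p * ff E m₁ (m+1)) ≤ ε * ((3/2)*K) :=
        mul_le_mul_of_nonneg_left hpff hε0.le
      have h2 : ε * ((3/2)*K) ≤ (3/(2*((m₁:ℝ)+3))) * (E/2)^(m₁+2) := by
        have hpos : (0:ℝ) < 2*((m₁:ℝ)+3) := by positivity
        have e : (3/(2*((m₁:ℝ)+3))) * (E/2)^(m₁+2)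
            = 3 * (E/2)^(m₁+2) / (2*((m₁:ℝ)+3)) := by ring
        rw [e, le_div_iff₀ hpos]
        linarith [hεK]
      have h3 : (E/2)^(m₁+2) = g1 * (E/2)^2 := by rw [e1, ← pow_add]
      have h4 : (3/(2*((m₁:ℝ)+3))) ≤ 3/8 := by
        rw [div_le_div_iff₀ (by positivity) (by norm_num)]
        linarith
      have h5 : (E/2)^2 ≤ E/4 := by
        have hEE : E*E ≤ E*1 := mul_le_mul_of_nonneg_left hE1 hE.le
        calc (E/2)^2 = E*E/4 := by ring
          _ ≤ E/4 := by linarith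
      have h6 : (3/(2*((m₁:ℝ)+3))) * (g1 * (E/2)^2) ≤ (3/8) * (g1 * (E/4)) := by
        apply mul_le_mul h4 (mul_le_mul_of_nonneg_left h5 hg1pos.le)
          (by positivity) (by norm_num)
      calc p * (ε * ff E m₁ (m+1)) = ε * (p * ff E m₁ (m+1)) := by ring
        _ ≤ (3/(2*((m₁:ℝ)+3))) * (E/2)^(m₁+2) := le_trans h1 h2
        _ = (3/(2*((m₁:ℝ)+3))) * (g1 * (E/2)^2) := by rw [h3]
        _ ≤ (3/8) * (g1 * (E/4)) := h6
        _ = (3*E/32) * g1 := by ring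
    have hterm2 : p * ((1+ε)*g2) ≤ (3*E/16) * g1 := by
      have hg21 : g2 = g1 := by rw [e1, e2]
      rw [hg21]
      have h1 : (1+ε)*g1 ≤ (3/2)*g1 := mul_le_mul_of_nonneg_right (by linarith) hg1pos.le
      have h2 : p * ((1+ε)*g1) ≤ (E/8) * ((3/2)*g1) :=
        mul_le_mul hpE h1 (mul_nonneg (by linarith) hg1pos.le) (by linarith)
      linarith [h2]
    linarith [hεterm, hterm2, mul_pos hE hg1pos]


variable {Ω : Type} [MeasurableSpace Ω]

/-- number of births strictly before time `T` -/
def bc (N : ℕ → Ω → ℕ) (T : ℕ) (ω : Ω) : ℕ :=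
  ∑ s ∈ Finset.range T, if N (s+1) ω = N s ω + 1 then 1 else 0

lemma measurable_bc {N : ℕ → Ω → ℕ} (hN : ∀ t, Measurable (N t)) (T : ℕ) :
    Measurable (bc N T) := by
  apply Finset.measurable_sum
  intro s _
  have hset : MeasurableSet {ω | N (s+1) ω = N s ω + 1} :=
    measurableSet_eq_fun (hN (s+1)) (measurable_from_nat.comp (hN s))
  exact Measurable.ite hset measurable_const measurable_const

lemma cyl_measurable {N : ℕ → Ω → ℕ} (hN : ∀ t, Measurable (N t)) (t : ℕ) (path : ℕ → ℕ) :
    MeasurableSet {ω | ∀ s ≤ t, N s ω = path s} := by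
  have : {ω | ∀ s ≤ t, N s ω = path s} = ⋂ (s : ℕ) (_ : s ≤ t), (N s)⁻¹' {path s} := by
    ext ω; simp [Set.mem_iInter]
  rw [this]
  exact MeasurableSet.iInter fun s => MeasurableSet.iInter fun _ =>
    hN s (measurableSet_singleton _)

lemma event_measurable {N : ℕ → Ω → ℕ} (hN : ∀ t, Measurable (N t)) (t j : ℕ) :
    MeasurableSet {ω | N t ω = j} :=
  hN t (measurableSet_singleton j)

/-- the key single-cylinder computation -/
lemma piece (μ : Measure Ω) [IsProbabilityMeasure μ]
    (N : ℕ → Ω → ℕ) (hN : ∀ t, Measurable (N t)) (t : ℕ)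
    (p q : ℕ → ℝ) (hpnn : ∀ m, 0 ≤ p m) (hqnn : ∀ m, 0 ≤ q m)
    (hpq : ∀ m, p m + q m ≤ 1)
    (hp00 : p 0 = 0) (hq00 : q 0 = 0)
    (lam : ℝ≥0∞) (F : ℕ → ℝ≥0∞)
    (hcore : ∀ m : ℕ,
      ENNReal.ofReal (p (m+1)) * (lam * F (m+2)) + ENNReal.ofReal (q (m+1)) * F m
        + ENNReal.ofReal (1 - p (m+1) - q (m+1)) * F (m+1) ≤ F (m+1))
    (path : ℕ → ℕ)
    (hb : μ {ω | ∀ s ≤ t, N s ω = path s} ≠ 0 →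
      μ[|{ω | ∀ s ≤ t, N s ω = path s}] {ω | N (t + 1) ω = path t + 1}
        = ENNReal.ofReal (p (path t)))
    (hd : 0 < path t → μ {ω | ∀ s ≤ t, N s ω = path s} ≠ 0 →
      μ[|{ω | ∀ s ≤ t, N s ω = path s}] {ω | N (t + 1) ω = path t - 1}
        = ENNReal.ofReal (q (path t)))
    (hh : μ {ω | ∀ s ≤ t, N s ω = path s} ≠ 0 →
      μ[|{ω | ∀ s ≤ t, N s ω = path s}] {ω | N (t + 1) ω = path t}
        = ENNReal.ofReal (1 - p (path t) - q (path t))) :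
    ∑' j : ℕ, ((if j = path t + 1 then lam else 1) * F j)
        * μ ({ω | ∀ s ≤ t, N s ω = path s} ∩ {ω | N (t+1) ω = j})
      ≤ F (path t) * μ {ω | ∀ s ≤ t, N s ω = path s} := by
  set A := {ω | ∀ s ≤ t, N s ω = path s} with hA
  have hAm : MeasurableSet A := cyl_measurable hN t path
  by_cases hA0 : μ A = 0
  · have hz : ∀ j : ℕ, ((if j = path t + 1 then lam else 1) * F j)
        * μ (A ∩ {ω | N (t+1) ω = j}) = 0 := by
      intro j
      rw [measure_mono_null Set.inter_subset_left hA0, mul_zero]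
    rw [tsum_congr hz, tsum_zero]
    exact zero_le
  -- nonzero cylinder
  have hSm : ∀ j : ℕ, MeasurableSet {ω | N (t+1) ω = j} :=
    fun j => event_measurable hN (t+1) j
  haveI hPc : IsProbabilityMeasure (μ[|A]) := cond_isProbabilityMeasure hA0
  have hinter : ∀ (U : Set Ω), μ (A ∩ U) = μ[|A] U * μ A := by
    intro U
    rw [cond_mul_eq_inter hAm U]
  have hcompl : ∀ (U : Set Ω), MeasurableSet U → μ[|A] U = 1 → μ (A ∩ Uᶜ) = 0 := by
    intro U hU h1
    rw [hinter Uᶜ, prob_compl_eq_one_sub hU, h1, tsub_self, zero_mul]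
  cases hmt : path t with
  | zero =>
    rw [hmt] at hb hd hh
    have hhold : μ[|A] {ω | N (t + 1) ω = 0} = 1 := by
      rw [hh hA0, hp00, hq00]
      norm_num
    have hnull : ∀ j : ℕ, j ≠ 0 → μ (A ∩ {ω | N (t+1) ω = j}) = 0 := by
      intro j hj
      apply measure_mono_null _ (hcompl _ (hSm 0) hhold)
      intro ω hω
      have h2 : N (t+1) ω = j := hω.2
      exact ⟨hω.1, fun h => hj (by have h0 : N (t+1) ω = 0 := h; omega)⟩
    have hsingle : ∀ j : ℕ, j ≠ 0 → ((if j = 0 + 1 then lam else 1) * F j)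
        * μ (A ∩ {ω | N (t+1) ω = j}) = 0 := by
      intro j hj; rw [hnull j hj, mul_zero]
    rw [tsum_eq_single 0 hsingle]
    have h0 : μ (A ∩ {ω | N (t+1) ω = 0}) = μ A := by
      rw [hinter, hhold, one_mul]
    rw [h0]
    simp
  | succ m' =>
    rw [hmt] at hb hd hh
    have hbp : μ[|A] {ω | N (t + 1) ω = m' + 1 + 1} = ENNReal.ofReal (p (m'+1)) := hb hA0
    have hdp : μ[|A] {ω | N (t + 1) ω = m'} = ENNReal.ofReal (q (m'+1)) := by
      have := hd (Nat.succ_pos m') hA0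
      simpa using this
    have hhp : μ[|A] {ω | N (t + 1) ω = m' + 1}
        = ENNReal.ofReal (1 - p (m'+1) - q (m'+1)) := hh hA0
    -- the union of the three options has conditional probability one
    have hdis1 : Disjoint {ω | N (t+1) ω = m'+1+1} {ω | N (t+1) ω = m'} := by
      rw [Set.disjoint_left]; intro ω h1 h2; simp only [Set.mem_setOf_eq] at h1 h2; omega
    have hdis2 : Disjoint ({ω | N (t+1) ω = m'+1+1} ∪ {ω | N (t+1) ω = m'})
        {ω | N (t+1) ω = m'+1} := by
      rw [Set.disjoint_left]; intro ω h1 h2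
      simp only [Set.mem_union, Set.mem_setOf_eq] at h1 h2; omega
    have hU1 : μ[|A] (({ω | N (t+1) ω = m'+1+1} ∪ {ω | N (t+1) ω = m'})
        ∪ {ω | N (t+1) ω = m'+1}) = 1 := by
      rw [measure_union hdis2 (hSm (m'+1)), measure_union hdis1 (hSm m'),
        hbp, hdp, hhp, ← ENNReal.ofReal_add (hpnn _) (hqnn _),
        ← ENNReal.ofReal_add (by linarith [hpnn (m'+1), hqnn (m'+1)]) (by linarith [hpq (m'+1)])]
      norm_num
    have hnull : ∀ j : ℕ, j ≠ m'+1+1 → j ≠ m' → j ≠ m'+1 →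
        μ (A ∩ {ω | N (t+1) ω = j}) = 0 := by
      intro j h1 h2 h3
      apply measure_mono_null _ (hcompl _ (((hSm _).union (hSm _)).union (hSm _)) hU1)
      intro ω hω
      refine ⟨hω.1, ?_⟩
      have hj : N (t+1) ω = j := hω.2
      simp only [Set.mem_compl_iff, Set.mem_union, Set.mem_setOf_eq, hj]
      push_neg
      exact ⟨⟨h1, h2⟩, h3⟩
    -- reduce the sum to three terms
    have hsum : ∑' j : ℕ, ((if j = m' + 1 + 1 then lam else 1) * F j)
        * μ (A ∩ {ω | N (t+1) ω = j})
        = ∑ j ∈ ({m'+1+1, m', m'+1} : Finset ℕ), ((if j = m' + 1 + 1 then lam else 1) * F j)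
          * μ (A ∩ {ω | N (t+1) ω = j}) := by
      apply tsum_eq_sum
      intro j hj
      simp only [Finset.mem_insert, Finset.mem_singleton] at hj
      push_neg at hj
      rw [hnull j hj.1 hj.2.1 hj.2.2, mul_zero]
    rw [hsum]
    have hne1 : (m'+1+1) ∉ ({m', m'+1} : Finset ℕ) := by simp; omega
    have hne2 : m' ∉ ({m'+1} : Finset ℕ) := by simp
    rw [Finset.sum_insert hne1, Finset.sum_insert hne2, Finset.sum_singleton]
    rw [if_pos rfl, if_neg (by omega), if_neg (by omega)]
    rw [hinter, hinter, hinter, hbp, hdp, hhp]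
    have hre : lam * F (m'+1+1) * (ENNReal.ofReal (p (m'+1)) * μ A)
        + (1 * F m' * (ENNReal.ofReal (q (m'+1)) * μ A)
        + 1 * F (m'+1) * (ENNReal.ofReal (1 - p (m'+1) - q (m'+1)) * μ A))
        = (ENNReal.ofReal (p (m'+1)) * (lam * F (m'+2)) + ENNReal.ofReal (q (m'+1)) * F m'
            + ENNReal.ofReal (1 - p (m'+1) - q (m'+1)) * F (m'+1)) * μ A := by
      ring_nf
    rw [hre]
    exact mul_le_mul_left (hcore m') (μ A)

namespace Step

/-- padding of a finite trajectory -/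
def pad (t : ℕ) (i : Fin (t+1) → ℕ) : ℕ → ℕ := fun s => if h : s < t+1 then i ⟨s, h⟩ else 0

lemma pad_eq (t : ℕ) (i : Fin (t+1) → ℕ) (s : ℕ) (hs : s ≤ t) :
    pad t i s = i ⟨s, Nat.lt_succ_of_le hs⟩ := by
  rw [pad, dif_pos (Nat.lt_succ_of_le hs)]

/-- birth count along an explicit path -/
def bcp (path : ℕ → ℕ) (T : ℕ) : ℕ :=
  ∑ s ∈ Finset.range T, if path (s+1) = path s + 1 then 1 else 0

lemma bc_on_cyl {N : ℕ → Ω → ℕ} (t : ℕ) (path : ℕ → ℕ) (ω : Ω)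
    (hω : ∀ s ≤ t, N s ω = path s) : bc N t ω = bcp path t := by
  apply Finset.sum_congr rfl
  intro s hs
  have hs' : s < t := Finset.mem_range.mp hs
  rw [hω s (le_of_lt hs'), hω (s+1) hs']

lemma step (μ : Measure Ω) [IsProbabilityMeasure μ]
    (N : ℕ → Ω → ℕ) (hN : ∀ t, Measurable (N t))
    (p q : ℕ → ℝ) (hpnn : ∀ m, 0 ≤ p m) (hqnn : ∀ m, 0 ≤ q m)
    (hpq : ∀ m, p m + q m ≤ 1) (hp00 : p 0 = 0) (hq00 : q 0 = 0)
    (lam : ℝ≥0∞) (F : ℕ → ℝ≥0∞)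
    (hcore : ∀ m : ℕ,
      ENNReal.ofReal (p (m+1)) * (lam * F (m+2)) + ENNReal.ofReal (q (m+1)) * F m
        + ENNReal.ofReal (1 - p (m+1) - q (m+1)) * F (m+1) ≤ F (m+1))
    (hb : ∀ (t : ℕ) (path : ℕ → ℕ),
      μ {ω | ∀ s ≤ t, N s ω = path s} ≠ 0 →
      μ[|{ω | ∀ s ≤ t, N s ω = path s}] {ω | N (t + 1) ω = path t + 1}
        = ENNReal.ofReal (p (path t)))
    (hd : ∀ (t : ℕ) (path : ℕ → ℕ), 0 < path t →
      μ {ω | ∀ s ≤ t, N s ω = path s} ≠ 0 →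
      μ[|{ω | ∀ s ≤ t, N s ω = path s}] {ω | N (t + 1) ω = path t - 1}
        = ENNReal.ofReal (q (path t)))
    (hh : ∀ (t : ℕ) (path : ℕ → ℕ),
      μ {ω | ∀ s ≤ t, N s ω = path s} ≠ 0 →
      μ[|{ω | ∀ s ≤ t, N s ω = path s}] {ω | N (t + 1) ω = path t}
        = ENNReal.ofReal (1 - p (path t) - q (path t)))
    (t : ℕ) :
    ∫⁻ ω, lam ^ (bc N (t+1) ω) * F (N (t+1) ω) ∂μ
      ≤ ∫⁻ ω, lam ^ (bc N t ω) * F (N t ω) ∂μ := by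
  classical
  set A : (Fin (t+1) → ℕ) → Set Ω := fun i => {ω | ∀ s ≤ t, N s ω = pad t i s} with hAdef
  have hAm : ∀ i, MeasurableSet (A i) := fun i => cyl_measurable hN t _
  have hdisj : Pairwise (Function.onFun Disjoint A) := by
    intro i j hij
    rw [Function.onFun, Set.disjoint_left]
    intro ω hωi hωj
    apply hij
    funext s
    have h1 := hωi (s : ℕ) (Nat.lt_succ_iff.mp s.isLt)
    have h2 := hωj (s : ℕ) (Nat.lt_succ_iff.mp s.isLt)
    rw [pad_eq t i _ (Nat.lt_succ_iff.mp s.isLt)] at h1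
    rw [pad_eq t j _ (Nat.lt_succ_iff.mp s.isLt)] at h2
    rw [← Fin.eta s s.isLt]
    rw [← h1, ← h2]
  have hcover : (⋃ i, A i) = Set.univ := by
    ext ω
    simp only [Set.mem_iUnion, Set.mem_univ, iff_true]
    refine ⟨fun s => N (s : ℕ) ω, fun s hs => ?_⟩
    rw [pad_eq t _ s hs]
  have hdec : ∀ (f : Ω → ℝ≥0∞), ∫⁻ ω, f ω ∂μ = ∑' i, ∫⁻ ω in A i, f ω ∂μ := by
    intro f
    rw [← setLIntegral_univ f, ← hcover, lintegral_iUnion hAm hdisj f]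
  rw [hdec, hdec]
  apply ENNReal.tsum_le_tsum
  intro i
  -- per-cylinder comparison
  set path : ℕ → ℕ := pad t i with hpath
  have hωcyl : ∀ ω ∈ A i, bc N t ω = bcp path t := fun ω hω => bc_on_cyl t path ω hω
  -- RHS on the cylinder
  have hR : ∫⁻ ω in A i, lam ^ (bc N t ω) * F (N t ω) ∂μ
      = (lam ^ (bcp path t) * F (path t)) * μ (A i) := by
    rw [setLIntegral_congr_fun (hAm i)
      (fun ω (hω : ω ∈ A i) => by
        rw [hωcyl ω hω, hω t le_rfl])]
    exact setLIntegral_const _ _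
  rw [hR]
  -- split cylinder according to next value
  have hsplit : A i = ⋃ j : ℕ, (A i ∩ {ω | N (t+1) ω = j}) := by
    ext ω
    simp only [Set.mem_iUnion, Set.mem_inter_iff, Set.mem_setOf_eq]
    exact ⟨fun h => ⟨N (t+1) ω, h, rfl⟩, fun ⟨j, hj, _⟩ => hj⟩
  have hdisj2 : Pairwise (Function.onFun Disjoint (fun j => A i ∩ {ω | N (t+1) ω = j})) := by
    intro j j' hjj'
    rw [Function.onFun, Set.disjoint_left]
    intro ω hω1 hω2
    exact hjj' (hω1.2.symm.trans hω2.2)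
  have hmint : ∀ j : ℕ, MeasurableSet (A i ∩ {ω | N (t+1) ω = j}) :=
    fun j => (hAm i).inter (event_measurable hN (t+1) j)
  have hconst : ∀ j : ℕ, ∀ ω ∈ (A i ∩ {ω | N (t+1) ω = j}),
      lam ^ (bc N (t+1) ω) * F (N (t+1) ω)
        = lam ^ (bcp path t) * ((if j = path t + 1 then lam else 1) * F j) := by
    intro j ω hω
    have hbc : bc N (t+1) ω = bcp path t + (if N (t+1) ω = N t ω + 1 then 1 else 0) := by
      rw [bc, Finset.sum_range_succ, ← bc, hωcyl ω hω.1]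
    have hNt : N t ω = path t := hω.1 t le_rfl
    have hNt1 : N (t+1) ω = j := hω.2
    rw [hbc, hNt, hNt1]
    split_ifs with h
    · rw [pow_succ]; ring
    · simp
  have hL : ∫⁻ ω in A i, lam ^ (bc N (t+1) ω) * F (N (t+1) ω) ∂μ
      = ∑' j : ℕ, (lam ^ (bcp path t) * ((if j = path t + 1 then lam else 1) * F j))
          * μ (A i ∩ {ω | N (t+1) ω = j}) := by
    conv_lhs => rw [hsplit]
    rw [lintegral_iUnion hmint hdisj2]
    apply tsum_congr
    intro j
    rw [setLIntegral_congr_fun (hmint j) (hconst j)]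
    exact setLIntegral_const _ _
  rw [hL]
  have hpiece := piece μ N hN t p q hpnn hqnn hpq hp00 hq00 lam F hcore path
    (hb t path) (hd t path) (hh t path)
  calc ∑' j : ℕ, (lam ^ (bcp path t) * ((if j = path t + 1 then lam else 1) * F j))
          * μ (A i ∩ {ω | N (t+1) ω = j})
      = lam ^ (bcp path t) * ∑' j : ℕ, ((if j = path t + 1 then lam else 1) * F j)
          * μ (A i ∩ {ω | N (t+1) ω = j}) := by
        rw [← ENNReal.tsum_mul_left]
        exact tsum_congr fun j => (mul_assoc _ _ _)
    _ ≤ lam ^ (bcp path t) * (F (path t) * μ (A i)) := mul_le_mul_right hpiece _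
    _ = (lam ^ (bcp path t) * F (path t)) * μ (A i) := (mul_assoc _ _ _).symm

lemma chain (μ : Measure Ω) [IsProbabilityMeasure μ]
    (N : ℕ → Ω → ℕ) (hN : ∀ t, Measurable (N t))
    (p q : ℕ → ℝ) (hpnn : ∀ m, 0 ≤ p m) (hqnn : ∀ m, 0 ≤ q m)
    (hpq : ∀ m, p m + q m ≤ 1) (hp00 : p 0 = 0) (hq00 : q 0 = 0)
    (lam : ℝ≥0∞) (F : ℕ → ℝ≥0∞)
    (hcore : ∀ m : ℕ,
      ENNReal.ofReal (p (m+1)) * (lam * F (m+2)) + ENNReal.ofReal (q (m+1)) * F m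
        + ENNReal.ofReal (1 - p (m+1) - q (m+1)) * F (m+1) ≤ F (m+1))
    (hb : ∀ (t : ℕ) (path : ℕ → ℕ),
      μ {ω | ∀ s ≤ t, N s ω = path s} ≠ 0 →
      μ[|{ω | ∀ s ≤ t, N s ω = path s}] {ω | N (t + 1) ω = path t + 1}
        = ENNReal.ofReal (p (path t)))
    (hd : ∀ (t : ℕ) (path : ℕ → ℕ), 0 < path t →
      μ {ω | ∀ s ≤ t, N s ω = path s} ≠ 0 →
      μ[|{ω | ∀ s ≤ t, N s ω = path s}] {ω | N (t + 1) ω = path t - 1}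
        = ENNReal.ofReal (q (path t)))
    (hh : ∀ (t : ℕ) (path : ℕ → ℕ),
      μ {ω | ∀ s ≤ t, N s ω = path s} ≠ 0 →
      μ[|{ω | ∀ s ≤ t, N s ω = path s}] {ω | N (t + 1) ω = path t}
        = ENNReal.ofReal (1 - p (path t) - q (path t)))
    (n : ℕ) (hstart : ∀ ω, N 0 ω = n) (T : ℕ) :
    ∫⁻ ω, lam ^ (bc N T ω) * F (N T ω) ∂μ ≤ F n := by
  induction T with
  | zero =>
    have hz : ∀ ω, lam ^ (bc N 0 ω) * F (N 0 ω) = F n := by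
      intro ω
      rw [hstart ω]
      simp [bc]
    rw [lintegral_congr hz, lintegral_const, measure_univ, mul_one]
  | succ t ih =>
    exact le_trans (step μ N hN p q hpnn hqnn hpq hp00 hq00 lam F hcore hb hd hh t) ih

lemma tailbound (μ : Measure Ω) [IsProbabilityMeasure μ]
    (N : ℕ → Ω → ℕ) (hN : ∀ t, Measurable (N t))
    (lam : ℝ≥0∞) (hlam1 : 1 ≤ lam) (hlamtop : lam ≠ ⊤)
    (F : ℕ → ℝ≥0∞) (hF1 : ∀ m, 1 ≤ F m) (n : ℕ)
    (hchain : ∀ T : ℕ, ∫⁻ ω, lam ^ (bc N T ω) * F (N T ω) ∂μ ≤ F n)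
    (a : ℕ) :
    μ {ω | (a:ℝ≥0∞) ≤ birthCount N ω} ≤ F n / lam ^ a := by
  have hlam0 : lam ≠ 0 := fun h => by simp [h] at hlam1
  have hpa0 : lam ^ a ≠ 0 := pow_ne_zero a hlam0
  have hpat : lam ^ a ≠ ⊤ := ENNReal.pow_ne_top hlamtop
  -- birthCount as sup of partial counts
  have hcast : ∀ (T : ℕ) (ω : Ω),
      ∑ t ∈ Finset.range T, (if N (t+1) ω = N t ω + 1 then (1:ℝ≥0∞) else 0)
        = (bc N T ω : ℝ≥0∞) := by
    intro T ω
    rw [bc]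
    push_cast
    apply Finset.sum_congr rfl
    intro s _
    split_ifs <;> simp
  have hBC : ∀ ω, birthCount N ω = ⨆ T : ℕ, (bc N T ω : ℝ≥0∞) := by
    intro ω
    rw [birthCount, ENNReal.tsum_eq_iSup_nat]
    exact iSup_congr fun T => hcast T ω
  -- inclusion into the union of finite-time events
  have hsub : {ω | (a:ℝ≥0∞) ≤ birthCount N ω} ⊆ ⋃ T : ℕ, {ω | a ≤ bc N T ω} := by
    intro ω hω
    simp only [Set.mem_setOf_eq] at hω
    rw [hBC ω] at hω
    rcases Nat.eq_zero_or_pos a with ha | ha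
    · exact Set.mem_iUnion.2 ⟨0, by simp [ha]⟩
    · have hlt : ((a-1 : ℕ) : ℝ≥0∞) < ⨆ T : ℕ, (bc N T ω : ℝ≥0∞) := by
        apply lt_of_lt_of_le _ hω
        exact_mod_cast Nat.sub_lt ha one_pos
      rcases lt_iSup_iff.mp hlt with ⟨T, hT⟩
      have : (a-1 : ℕ) < bc N T ω := by exact_mod_cast hT
      exact Set.mem_iUnion.2 ⟨T, by simp only [Set.mem_setOf_eq]; omega⟩
  have hmono : Monotone (fun T : ℕ => {ω | a ≤ bc N T ω}) := by
    intro T T' hTT' ω hω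
    simp only [Set.mem_setOf_eq] at hω ⊢
    have hbc : bc N T ω ≤ bc N T' ω := by
      apply Finset.sum_le_sum_of_subset (Finset.range_subset_range.2 hTT')
    omega
  calc μ {ω | (a:ℝ≥0∞) ≤ birthCount N ω} ≤ μ (⋃ T : ℕ, {ω | a ≤ bc N T ω}) :=
        measure_mono hsub
    _ = ⨆ T : ℕ, μ {ω | a ≤ bc N T ω} := hmono.measure_iUnion
    _ ≤ F n / lam ^ a := by
        apply iSup_le
        intro T
        have hWmeas : Measurable (fun ω => lam ^ (bc N T ω) * F (N T ω)) := by
          apply Measurable.mul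
          · exact (measurable_from_nat (f := fun k : ℕ => lam ^ k)).comp (measurable_bc hN T)
          · exact (measurable_from_nat (f := F)).comp (hN T)
        have hmar := mul_meas_ge_le_lintegral₀ (μ := μ) hWmeas.aemeasurable (lam ^ a)
        have hsubset : {ω | a ≤ bc N T ω} ⊆ {ω | lam ^ a ≤ lam ^ (bc N T ω) * F (N T ω)} := by
          intro ω hω
          simp only [Set.mem_setOf_eq] at hω ⊢
          calc lam ^ a ≤ lam ^ (bc N T ω) := pow_le_pow_right₀ hlam1 hω
            _ = lam ^ (bc N T ω) * 1 := (mul_one _).symm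
            _ ≤ lam ^ (bc N T ω) * F (N T ω) := mul_le_mul_right (hF1 _) _
        rw [ENNReal.le_div_iff_mul_le (Or.inl hpa0) (Or.inl hpat)]
        calc μ {ω | a ≤ bc N T ω} * lam ^ a ≤ μ {ω | lam ^ a ≤ lam ^ (bc N T ω) * F (N T ω)} * lam ^ a :=
              mul_le_mul_left (measure_mono hsubset) _
          _ = lam ^ a * μ {ω | lam ^ a ≤ lam ^ (bc N T ω) * F (N T ω)} := mul_comm _ _
          _ ≤ ∫⁻ ω, lam ^ (bc N T ω) * F (N T ω) ∂μ := hmar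
          _ ≤ F n := hchain T

end Step

end Stmt8Aux


set_option maxHeartbeats 2000000 in
open Stmt8Aux Stmt8Aux.Step in
/-- High-probability bound on the number of births of a nice birth-death chain:
for every `k > 0` there is a constant `C(k)` such that, for all sufficiently
large `n`, `Pr[B(n) ≥ C(k)·(log n)²] ≤ 1/n^k`. -/
theorem stmt_8 (C D : ℝ) (hC : 0 < C) (hD : 0 < D) (k : ℝ) (hk : 0 < k) :
    ∃ Ck : ℝ, 0 < Ck ∧ ∃ n₀ : ℕ, ∀ n : ℕ, n₀ ≤ n →
      ∀ (Ω : Type) (_ : MeasurableSpace Ω) (μ : Measure Ω), IsProbabilityMeasure μ →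
      ∀ (N : ℕ → Ω → ℕ) (p q : ℕ → ℝ),
        (∀ t, Measurable (N t)) →
        (∀ m, 0 ≤ p m) → (∀ m, 0 ≤ q m) → (∀ m, p m + q m ≤ 1) →
        p 0 = 0 → q 0 = 0 →
        (∀ m : ℕ, 0 < m → p m ≤ C / m) →
        (∀ m : ℕ, 0 < m → D ≤ q m) →
        (∀ ω, N 0 ω = n) →
        -- birth transitions, conditionally on any past trajectory
        (∀ (t : ℕ) (path : ℕ → ℕ),
          μ {ω | ∀ s ≤ t, N s ω = path s} ≠ 0 →
          μ[|{ω | ∀ s ≤ t, N s ω = path s}] {ω | N (t + 1) ω = path t + 1}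
            = ENNReal.ofReal (p (path t))) →
        -- death transitions
        (∀ (t : ℕ) (path : ℕ → ℕ), 0 < path t →
          μ {ω | ∀ s ≤ t, N s ω = path s} ≠ 0 →
          μ[|{ω | ∀ s ≤ t, N s ω = path s}] {ω | N (t + 1) ω = path t - 1}
            = ENNReal.ofReal (q (path t))) →
        -- holding steps
        (∀ (t : ℕ) (path : ℕ → ℕ),
          μ {ω | ∀ s ≤ t, N s ω = path s} ≠ 0 →
          μ[|{ω | ∀ s ≤ t, N s ω = path s}] {ω | N (t + 1) ω = path t}
            = ENNReal.ofReal (1 - p (path t) - q (path t))) →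
        μ {ω | ENNReal.ofReal (Ck * (Real.log n) ^ 2) ≤ birthCount N ω} ≤
          ENNReal.ofReal (1 / (n : ℝ) ^ k) := by
  classical
  -- constants
  set E : ℝ := min D 1 with hEdef
  have hE : 0 < E := lt_min hD one_pos
  have hE1 : E ≤ 1 := min_le_right D 1
  set K : ℝ := max C 1 with hKdef
  have hK : (1:ℝ) ≤ K := le_max_right C 1
  have hCK : C ≤ K := le_max_left C 1
  have hKpos : (0:ℝ) < K := lt_of_lt_of_le one_pos hK
  set m₁ : ℕ := ⌈8*K/E⌉₊ with hm₁def
  have hm₁ : 1 ≤ m₁ := Nat.one_le_ceil_iff.mpr (by positivity)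
  have hm₁K : 8*K ≤ E * m₁ := by
    have h1 := Nat.le_ceil (8*K/E)
    rw [div_le_iff₀ hE] at h1
    calc 8*K ≤ (⌈8*K/E⌉₊:ℝ) * E := h1
      _ = E * m₁ := by rw [hm₁def]; ring
  set ε : ℝ := (E/2)^(m₁+2) / (((m₁:ℝ)+3)*K) with hεdef
  have hε0 : 0 < ε := by positivity
  set c : ℝ := Real.log (1+ε) with hcdef
  have hc : 0 < c := Real.log_pos (by linarith)
  set M : ℝ := max ((k+2+c)/c) 1 with hMdef
  refine ⟨1, one_pos, ⌈Real.exp M⌉₊, ?_⟩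
  intro n hn Ω mΩ μ hμ N p q hN hpnn hqnn hpq hp00 hq00 hpC hqD hstart hb hd hh
  have hM1 : (1:ℝ) ≤ M := le_max_right _ 1
  have hnR : Real.exp M ≤ (n:ℝ) := le_trans (Nat.le_ceil _) (by exact_mod_cast hn)
  have hexpM : M + 1 ≤ Real.exp M := Real.add_one_le_exp M
  have hn1 : (1:ℝ) ≤ (n:ℝ) := by linarith
  have hnpos : (0:ℝ) < n := by linarith
  have hL : M ≤ Real.log n := by rwa [Real.le_log_iff_exp_le hnpos]
  set L : ℝ := Real.log n with hLdef
  have hL1 : 1 ≤ L := le_trans hM1 hL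
  -- the Lyapunov data
  set F : ℕ → ℝ≥0∞ := fun m => ENNReal.ofReal (ff E m₁ m) with hFdef
  set lam : ℝ≥0∞ := ENNReal.ofReal (1+ε) with hlamdef
  have hlam1 : 1 ≤ lam := by
    rw [hlamdef, ← ENNReal.ofReal_one]
    exact ENNReal.ofReal_le_ofReal (by linarith)
  have hlamtop : lam ≠ ⊤ := ENNReal.ofReal_ne_top
  have hF1 : ∀ m, 1 ≤ F m := by
    intro m
    rw [hFdef, ← ENNReal.ofReal_one]
    exact ENNReal.ofReal_le_ofReal (ff_one_le hE m)
  -- core inequality in ℝ≥0∞ form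
  have hcoreE : ∀ m : ℕ,
      ENNReal.ofReal (p (m+1)) * (lam * F (m+2)) + ENNReal.ofReal (q (m+1)) * F m
        + ENNReal.ofReal (1 - p (m+1) - q (m+1)) * F (m+1) ≤ F (m+1) := by
    intro m
    have hp1 : p (m+1) ≤ 1 := by
      have h1 := hpq (m+1); have h2 := hqnn (m+1); linarith
    have hpKm : p (m+1) ≤ K/((m:ℝ)+1) := by
      have h1 := hpC (m+1) (Nat.succ_pos m)
      push_cast at h1
      have h2 : C/((m:ℝ)+1) ≤ K/((m:ℝ)+1) := by gcongr
      linarith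
    have hqm : E ≤ q (m+1) := le_trans (min_le_left D 1) (hqD (m+1) (Nat.succ_pos m))
    have hcore0 := core hE hE1 K hK hm₁ hm₁K ε hε0 (le_refl _) m
      (p (m+1)) (q (m+1)) (hpnn _) hpKm hp1 hqm
    have h1pq : 0 ≤ 1 - p (m+1) - q (m+1) := by
      have := hpq (m+1); linarith
    have hffnn : ∀ j, 0 ≤ ff E m₁ j := fun j => le_trans zero_le_one (ff_one_le hE j)
    rw [hFdef, hlamdef]
    rw [← ENNReal.ofReal_mul (by positivity : (0:ℝ) ≤ 1+ε)]
    rw [← ENNReal.ofReal_mul (hpnn _), ← ENNReal.ofReal_mul (hqnn _),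
      ← ENNReal.ofReal_mul h1pq,
      ← ENNReal.ofReal_add (mul_nonneg (hpnn _) (mul_nonneg (by positivity) (hffnn _)))
        (mul_nonneg (hqnn _) (hffnn _)),
      ← ENNReal.ofReal_add (add_nonneg (mul_nonneg (hpnn _) (mul_nonneg (by positivity) (hffnn _)))
        (mul_nonneg (hqnn _) (hffnn _))) (mul_nonneg h1pq (hffnn _))]
    exact ENNReal.ofReal_le_ofReal hcore0
  -- supermartingale bound at every time
  have hchainAll : ∀ T : ℕ, ∫⁻ ω, lam ^ (bc N T ω) * F (N T ω) ∂μ ≤ F n :=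
    chain μ N hN p q hpnn hqnn hpq hp00 hq00 lam F hcoreE hb hd hh n hstart
  set a : ℕ := ⌊L^2⌋₊ with hadef
  have htail := tailbound μ N hN lam hlam1 hlamtop F hF1 n hchainAll a
  -- event inclusion
  have hevent : {ω | ENNReal.ofReal (1 * L ^ 2) ≤ birthCount N ω}
      ⊆ {ω | (a:ℝ≥0∞) ≤ birthCount N ω} := by
    intro ω hω
    simp only [Set.mem_setOf_eq] at hω ⊢
    refine le_trans ?_ hω
    rw [← ENNReal.ofReal_natCast a]
    exact ENNReal.ofReal_le_ofReal (by
      rw [one_mul]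
      exact Nat.floor_le (by positivity))
  refine le_trans (measure_mono hevent) (le_trans htail ?_)
  -- final numeric computation
  have hFle : F n ≤ ENNReal.ofReal ((n:ℝ)+1) := by
    rw [hFdef]
    apply ENNReal.ofReal_le_ofReal
    calc ff E m₁ n ≤ 1 + (n:ℝ)/2 := ff_le hE hE1 hm₁ n
      _ ≤ (n:ℝ)+1 := by linarith
  have hlampow : lam ^ a = ENNReal.ofReal ((1+ε)^a) := by
    rw [hlamdef, ← ENNReal.ofReal_pow (by positivity)]
  have hpow0 : ENNReal.ofReal ((1+ε)^a) ≠ 0 :=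
    (ENNReal.ofReal_pos.mpr (by positivity)).ne'
  have hdivle : F n / lam ^ a ≤ ENNReal.ofReal ((n:ℝ)+1) / ENNReal.ofReal ((1+ε)^a) := by
    rw [hlampow]
    exact ENNReal.div_le_div_right hFle _
  refine le_trans hdivle ?_
  rw [ENNReal.div_le_iff hpow0 ENNReal.ofReal_ne_top]
  rw [← ENNReal.ofReal_mul (by positivity : (0:ℝ) ≤ 1/(n:ℝ)^k)]
  apply ENNReal.ofReal_le_ofReal
  -- the real inequality : (n+1) ≤ (1/n^k)*(1+ε)^a
  have hrpow : (n:ℝ) ^ k = Real.exp (L * k) := by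
    rw [Real.rpow_def_of_pos hnpos]
  have hrpowpos : (0:ℝ) < (n:ℝ) ^ k := by rw [hrpow]; exact Real.exp_pos _
  rw [div_mul_eq_mul_div, le_div_iff₀ hrpowpos]
  -- (n+1) * n^k ≤ (1+ε)^a
  have haR : L^2 - 1 ≤ (a:ℝ) := by
    have := Nat.lt_floor_add_one (L^2)
    rw [hadef]
    push_cast
    linarith [Nat.lt_floor_add_one (L^2)]
  have hexp1 : (1+ε) = Real.exp c := (Real.exp_log (by linarith)).symm
  have hpowexp : (1+ε)^a = Real.exp ((a:ℝ) * c) := by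
    rw [hexp1, ← Real.exp_nat_mul]
  have hlogn1 : Real.log ((n:ℝ)+1) ≤ 1 + L := by
    have h2 : Real.log ((n:ℝ)+1) ≤ Real.log (2*(n:ℝ)) :=
      Real.log_le_log (by linarith) (by linarith)
    rw [Real.log_mul (by norm_num) (by linarith)] at h2
    have h3 : Real.log 2 ≤ 1 := by
      have := Real.log_le_sub_one_of_pos (by norm_num : (0:ℝ) < 2)
      linarith
    rw [hLdef]
    linarith
  have hn1exp : (n:ℝ)+1 = Real.exp (Real.log ((n:ℝ)+1)) :=
    (Real.exp_log (by linarith)).symm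
  rw [hpowexp, hrpow, hn1exp, ← Real.exp_add, one_mul, Real.exp_le_exp]
  -- log(n+1) + L*k ≤ a*c
  have hMc : (k+2+c)/c ≤ L := le_trans (le_max_left _ _) hL
  have hcL : k+2+c ≤ c*L := by
    rw [div_le_iff₀ hc] at hMc
    linarith
  have h1 : (L^2-1)*c ≤ (a:ℝ)*c := mul_le_mul_of_nonneg_right haR hc.le
  have h2 : L*(k+2+c) ≤ L*(c*L) := mul_le_mul_of_nonneg_left hcL (by linarith)
  have h3 : 0 ≤ (L-1)*(1+c) := mul_nonneg (by linarith) (by linarith)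
  nlinarith [h1, h2, h3, hlogn1]
end

section
/- For a nice birth-death chain started at state n and any constant k > 0, there exists a constant θ(k) such that the extinction time satisfies Pr[E(n) ≥ θ(k)·n] ≤ 1/n^k for all sufficiently large n. -/
open MeasureTheory ProbabilityTheory
open scoped ENNReal

noncomputable section

namespace Stmt9

def nr (C D : ℝ) : ℝ := D / (2 * (1 - D))

def nM (C D : ℝ) : ℕ := ⌈8 * C / D⌉₊ + 1

def ng (C D : ℝ) (m : ℕ) : ℝ := if m ≤ nM C D then (nr C D) ^ m else (nr C D) ^ (nM C D) * 2 ^ (m - nM C D)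

def nφ (C D : ℝ) (m : ℕ) : ℝ := ∑ j ∈ Finset.range m, ng C D (j + 1)

def nε (C D : ℝ) : ℝ := min (D / 8) (D / 2 * min (nr C D) ((nr C D) ^ (nM C D)) / nφ C D (nM C D))

variable {C D : ℝ}

lemma hr (hD : 0 < D) (hD1 : D < 1) : 0 < nr C D := by
  have h : (0:ℝ) < 2 * (1 - D) := by linarith
  exact div_pos hD h

lemma ng_pos (hD : 0 < D) (hD1 : D < 1) (m : ℕ) : 0 < ng C D m := by
  unfold ng
  have := hr (C := C) hD hD1
  split <;> positivity

lemma nφ_zero : nφ C D 0 = 0 := by simp [nφ]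

lemma nφ_succ (m : ℕ) : nφ C D (m + 1) = nφ C D m + ng C D (m + 1) := by
  simp [nφ, Finset.sum_range_succ]

lemma nφ_nonneg (hD : 0 < D) (hD1 : D < 1) (m : ℕ) : 0 ≤ nφ C D m :=
  Finset.sum_nonneg fun j _ => (ng_pos hD hD1 _).le

lemma nφ_mono (hD : 0 < D) (hD1 : D < 1) : Monotone (nφ C D) := by
  intro a b hab
  exact Finset.sum_le_sum_of_subset_of_nonneg (Finset.range_subset_range.2 hab)
    (fun j _ _ => (ng_pos hD hD1 _).le)

lemma one_le_nM : 1 ≤ nM C D := Nat.le_add_left 1 _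

lemma nφ_one : nφ C D 1 = nr C D := by
  have : (1 : ℕ) ≤ nM C D := one_le_nM
  simp [nφ, ng, this]
  intro h; omega

lemma nφ_M_pos (hD : 0 < D) (hD1 : D < 1) : 0 < nφ C D (nM C D) := by
  have h1 : nφ C D 1 ≤ nφ C D (nM C D) := nφ_mono hD hD1 one_le_nM
  rw [nφ_one] at h1
  exact lt_of_lt_of_le (hr hD hD1) h1

lemma nε_pos (hD : 0 < D) (hD1 : D < 1) : 0 < nε C D := by
  have h1 := hr (C := C) hD hD1
  have h2 := nφ_M_pos (C := C) hD hD1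
  apply lt_min (by linarith)
  apply div_pos _ h2
  have : 0 < min (nr C D) ((nr C D) ^ (nM C D)) := lt_min h1 (by positivity)
  nlinarith

lemma nε_le (hD : 0 < D) : nε C D ≤ D / 8 := min_le_left _ _

lemma nε_lt_one (hD : 0 < D) (hD1 : D < 1) : nε C D < 1 :=
  lt_of_le_of_lt (nε_le hD) (by linarith)

lemma nε_M (hD : 0 < D) (hD1 : D < 1) :
    nε C D * nφ C D (nM C D) ≤ D / 2 * min (nr C D) ((nr C D) ^ (nM C D)) := by
  have h2 := nφ_M_pos (C := C) hD hD1
  have := min_le_right (D / 8) (D / 2 * min (nr C D) ((nr C D) ^ (nM C D)) / nφ C D (nM C D))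
  calc nε C D * nφ C D (nM C D)
      ≤ (D / 2 * min (nr C D) ((nr C D) ^ (nM C D)) / nφ C D (nM C D)) * nφ C D (nM C D) := by
        exact mul_le_mul_of_nonneg_right this h2.le
    _ = D / 2 * min (nr C D) ((nr C D) ^ (nM C D)) := by field_simp

lemma min_pow_le (hD : 0 < D) (hD1 : D < 1) {j : ℕ} (h1 : 1 ≤ j) (h2 : j ≤ nM C D) :
    min (nr C D) ((nr C D) ^ (nM C D)) ≤ (nr C D) ^ j := by
  have h := hr (C := C) hD hD1
  rcases le_total (nr C D) 1 with hc | hc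
  · exact le_trans (min_le_right _ _) (pow_le_pow_of_le_one h.le hc h2)
  · calc min (nr C D) ((nr C D) ^ (nM C D)) ≤ nr C D := min_le_left _ _
      _ = (nr C D) ^ 1 := (pow_one _).symm
      _ ≤ (nr C D) ^ j := pow_le_pow_right₀ hc h1

lemma ng_eq_of_ge {m : ℕ} (h : nM C D ≤ m) :
    ng C D m = (nr C D) ^ (nM C D) * 2 ^ (m - nM C D) := by
  unfold ng
  rcases eq_or_lt_of_le h with h' | h'
  · simp [← h']
  · rw [if_neg (by omega)]

lemma ng_succ_of_ge {m : ℕ} (h : nM C D ≤ m) : ng C D (m + 1) = 2 * ng C D m := by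
  rw [ng_eq_of_ge h, ng_eq_of_ge (le_trans h (Nat.le_succ m))]
  have : m + 1 - nM C D = (m - nM C D) + 1 := by omega
  rw [this, pow_succ]
  ring

lemma ng_ge_of_ge (hD : 0 < D) (hD1 : D < 1) {m : ℕ} (h : nM C D ≤ m) :
    (nr C D) ^ (nM C D) ≤ ng C D m := by
  rw [ng_eq_of_ge h]
  have h1 := hr (C := C) hD hD1
  nlinarith [pow_pos h1 (nM C D), one_le_pow₀ (by norm_num : (1:ℝ) ≤ 2) (n := m - nM C D)]

lemma nφ_le_of_ge (hD : 0 < D) (hD1 : D < 1) {m : ℕ} (h : nM C D ≤ m) :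
    nφ C D m ≤ nφ C D (nM C D) + 2 * ng C D m := by
  induction m, h using Nat.le_induction with
  | base => nlinarith [ng_pos (C := C) hD hD1 (nM C D)]
  | succ m hm ih =>
    rw [nφ_succ, ng_succ_of_ge hm]
    have := ng_pos (C := C) hD hD1 (m + 1)
    rw [ng_succ_of_ge hm] at this
    linarith

/-- Key drift estimate: `p * g(m+2) + ε * φ(m+1) ≤ D * g(m+1)`. -/
lemma key (hC : 0 < C) (hD : 0 < D) (hD1 : D < 1) (m : ℕ) (p : ℝ)
    (hp0 : 0 ≤ p) (hpD : p ≤ 1 - D) (hpC : p ≤ C / (m + 1)) :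
    p * ng C D (m + 2) + nε C D * nφ C D (m + 1) ≤ D * ng C D (m + 1) := by
  have hrpos := hr (C := C) hD hD1
  have hεpos := nε_pos (C := C) hD hD1
  rcases le_or_gt (m + 2) (nM C D) with hcase | hcase
  · -- small regime
    have h1 : ng C D (m + 2) = (nr C D) ^ (m + 2) := by unfold ng; rw [if_pos hcase]
    have h2 : ng C D (m + 1) = (nr C D) ^ (m + 1) := by unfold ng; rw [if_pos (by omega)]
    have hmul : (1 - D) * nr C D = D / 2 := by
      have h2D : (2:ℝ) * (1 - D) ≠ 0 := by nlinarith
      have h1D : (1:ℝ) - D ≠ 0 := (by linarith : (0:ℝ) < 1 - D).ne'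
      unfold nr; field_simp
    have hA : p * ng C D (m + 2) ≤ D / 2 * (nr C D) ^ (m + 1) := by
      rw [h1, pow_succ]
      calc p * ((nr C D) ^ (m + 1) * nr C D) ≤ (1 - D) * ((nr C D) ^ (m + 1) * nr C D) := by
            apply mul_le_mul_of_nonneg_right hpD; positivity
        _ = D / 2 * (nr C D) ^ (m + 1) := by rw [← mul_assoc, mul_comm (1 - D), mul_assoc, hmul]; ring
    have hB : nε C D * nφ C D (m + 1) ≤ D / 2 * (nr C D) ^ (m + 1) := by
      have hφ : nφ C D (m + 1) ≤ nφ C D (nM C D) := nφ_mono hD hD1 (by omega)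
      have := nε_M (C := C) hD hD1
      have hmin : min (nr C D) ((nr C D) ^ (nM C D)) ≤ (nr C D) ^ (m + 1) :=
        min_pow_le hD hD1 (by omega) (by omega)
      nlinarith [nφ_nonneg (C := C) hD hD1 (m + 1)]
    rw [h2]; linarith
  · -- large regime: m + 1 ≥ M
    have hge : nM C D ≤ m + 1 := by omega
    have h1 : ng C D (m + 2) = 2 * ng C D (m + 1) := ng_succ_of_ge hge
    have hgpos := ng_pos (C := C) hD hD1 (m + 1)
    have hpD8 : p ≤ D / 8 := by
      have hMle : (8 * C / D : ℝ) ≤ (nM C D : ℝ) := by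
        have := Nat.le_ceil (8 * C / D)
        have : ((⌈8 * C / D⌉₊ : ℕ) : ℝ) ≤ (nM C D : ℝ) := by
          unfold nM; push_cast; linarith
        linarith [Nat.le_ceil (8 * C / D)]
      have hm1 : (nM C D : ℝ) ≤ (m + 1 : ℝ) := by exact_mod_cast Nat.cast_le.mpr hge
      have h8 : 8 * C ≤ D * (m + 1) := by
        have : 8 * C / D ≤ (m + 1 : ℝ) := le_trans hMle hm1
        calc 8 * C = D * (8 * C / D) := by field_simp
          _ ≤ D * (m + 1) := by apply mul_le_mul_of_nonneg_left this hD.le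
      have : C / (m + 1 : ℝ) ≤ D / 8 := by
        rw [div_le_div_iff₀ (by positivity) (by norm_num)]
        linarith
      linarith
    have hA : p * ng C D (m + 2) ≤ D / 4 * ng C D (m + 1) := by
      rw [h1]; nlinarith
    have hB : nε C D * nφ C D (m + 1) ≤ 3 * D / 4 * ng C D (m + 1) := by
      have hφ := nφ_le_of_ge (C := C) hD hD1 hge
      have hεM := nε_M (C := C) hD hD1
      have hminle : min (nr C D) ((nr C D) ^ (nM C D)) ≤ (nr C D) ^ (nM C D) := min_le_right _ _
      have hgge := ng_ge_of_ge (C := C) hD hD1 hge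
      have hε8 : nε C D ≤ D / 8 := nε_le hD
      -- nε * nφ(m+1) ≤ nε * (φM + 2 g) = nε φM + 2 nε g ≤ D/2 g + D/4 g
      have e1 : nε C D * nφ C D (m + 1) ≤ nε C D * (nφ C D (nM C D) + 2 * ng C D (m + 1)) :=
        mul_le_mul_of_nonneg_left hφ hεpos.le
      have e2 : nε C D * nφ C D (nM C D) ≤ D / 2 * ng C D (m + 1) := by nlinarith
      nlinarith
    linarith

/-- Drift inequality in the original form, for state `m + 1 ≥ 1`. -/
lemma drift (hC : 0 < C) (hD : 0 < D) (hD1 : D < 1) (m : ℕ) (p q : ℝ)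
    (hp0 : 0 ≤ p) (hqD : D ≤ q) (hpq : p + q ≤ 1) (hpC : p ≤ C / (m + 1)) :
    p * nφ C D (m + 2) + q * nφ C D m + (1 - p - q) * nφ C D (m + 1)
      ≤ (1 - nε C D) * nφ C D (m + 1) := by
  have h1 : nφ C D (m + 2) = nφ C D (m + 1) + ng C D (m + 2) := nφ_succ _
  have h2 : nφ C D (m + 1) = nφ C D m + ng C D (m + 1) := nφ_succ _
  have hkey := key hC hD hD1 m p hp0 (by linarith) hpC
  have hg := ng_pos (C := C) hD hD1 (m + 1)
  nlinarith

lemma nφ_growth (hD : 0 < D) (hD1 : D < 1) (n : ℕ) :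
    nφ C D n ≤ (nφ C D (nM C D) + 2 * (max (nr C D) 1) ^ (nM C D)) * 2 ^ n := by
  have hrpos := hr (C := C) hD hD1
  have hMpos := nφ_M_pos (C := C) hD hD1
  have hg2 : ng C D n ≤ (max (nr C D) 1) ^ (nM C D) * 2 ^ n := by
    unfold ng
    split
    · rename_i h
      calc (nr C D) ^ n ≤ (max (nr C D) 1) ^ n := by
            apply pow_le_pow_left₀ hrpos.le (le_max_left _ _)
        _ ≤ (max (nr C D) 1) ^ (nM C D) := pow_le_pow_right₀ (le_max_right _ _) h
        _ ≤ (max (nr C D) 1) ^ (nM C D) * 2 ^ n := by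
            nlinarith [pow_pos (lt_of_lt_of_le zero_lt_one (le_max_right (nr C D) 1)) (nM C D),
              one_le_pow₀ (by norm_num : (1:ℝ) ≤ 2) (n := n)]
    · rename_i h
      have : (nr C D) ^ (nM C D) ≤ (max (nr C D) 1) ^ (nM C D) :=
        pow_le_pow_left₀ hrpos.le (le_max_left _ _) _
      have h2 : (2:ℝ) ^ (n - nM C D) ≤ 2 ^ n := pow_le_pow_right₀ (by norm_num) (by omega)
      nlinarith [pow_pos hrpos (nM C D), pow_pos (by norm_num : (0:ℝ) < 2) (n - nM C D)]
  rcases le_or_gt n (nM C D) with h | h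
  · have : nφ C D n ≤ nφ C D (nM C D) := nφ_mono hD hD1 h
    nlinarith [one_le_pow₀ (by norm_num : (1:ℝ) ≤ 2) (n := n),
      pow_pos (lt_of_lt_of_le zero_lt_one (le_max_right (nr C D) 1)) (nM C D)]
  · have hφ := nφ_le_of_ge (C := C) hD hD1 h.le
    have := hg2
    nlinarith [one_le_pow₀ (by norm_num : (1:ℝ) ≤ 2) (n := n)]

variable {Ω : Type} [MeasurableSpace Ω]

lemma step (hC : 0 < C) (hD : 0 < D) (hD1 : D < 1)
    (μ : Measure Ω) [IsProbabilityMeasure μ]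
    (N : ℕ → Ω → ℕ) (p q : ℕ → ℝ)
    (hNm : ∀ t, Measurable (N t))
    (hp0 : ∀ m, 0 ≤ p m) (hq0 : ∀ m, 0 ≤ q m) (hpq1 : ∀ m, p m + q m ≤ 1)
    (hpz : p 0 = 0) (hqz : q 0 = 0)
    (hpC : ∀ m : ℕ, 0 < m → p m ≤ C / m)
    (hbirth : ∀ (t : ℕ) (path : ℕ → ℕ),
      μ {ω | ∀ s ≤ t, N s ω = path s} ≠ 0 →
      μ[|{ω | ∀ s ≤ t, N s ω = path s}] {ω | N (t + 1) ω = path t + 1}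
        = ENNReal.ofReal (p (path t)))
    (hdeath : ∀ (t : ℕ) (path : ℕ → ℕ), 0 < path t →
      μ {ω | ∀ s ≤ t, N s ω = path s} ≠ 0 →
      μ[|{ω | ∀ s ≤ t, N s ω = path s}] {ω | N (t + 1) ω = path t - 1}
        = ENNReal.ofReal (q (path t)))
    (hhold : ∀ (t : ℕ) (path : ℕ → ℕ),
      μ {ω | ∀ s ≤ t, N s ω = path s} ≠ 0 →
      μ[|{ω | ∀ s ≤ t, N s ω = path s}] {ω | N (t + 1) ω = path t}
        = ENNReal.ofReal (1 - p (path t) - q (path t)))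
    (t : ℕ) (hqD : ∀ m : ℕ, 0 < m → D ≤ q m) :
    ∫⁻ ω, ENNReal.ofReal (nφ C D (N (t + 1) ω)) ∂μ
      ≤ ENNReal.ofReal (1 - nε C D) * ∫⁻ ω, ENNReal.ofReal (nφ C D (N t ω)) ∂μ := by
  classical
  set F : ℕ → ℝ≥0∞ := fun m => ENNReal.ofReal (nφ C D m) with hF
  set pth : (Fin (t + 1) → ℕ) → ℕ → ℕ :=
    fun v s => if h : s < t + 1 then v ⟨s, h⟩ else 0 with hpth
  set S : (Fin (t + 1) → ℕ) → Set Ω := fun v => {ω | ∀ s ≤ t, N s ω = pth v s} with hS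
  have hSmeas : ∀ v, MeasurableSet (S v) := by
    intro v
    have : S v = ⋂ s : ℕ, ⋂ (_ : s ≤ t), N s ⁻¹' {pth v s} := by
      ext ω; simp [hS, Set.mem_iInter]
    rw [this]
    exact MeasurableSet.iInter fun s =>
      MeasurableSet.iInter fun _ => (hNm s) (measurableSet_singleton _)
  have hdisj : Pairwise (Function.onFun Disjoint S) := by
    intro v w hvw
    rw [Function.onFun, Set.disjoint_left]
    intro ω hv hw
    apply hvw
    funext i
    have h1 := hv i.1 (Nat.lt_succ_iff.mp i.isLt)
    have h2 := hw i.1 (Nat.lt_succ_iff.mp i.isLt)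
    simp only [hpth, dif_pos i.isLt, Fin.eta] at h1 h2
    rw [← h1, h2]
  have hcover : ⋃ v, S v = Set.univ := by
    ext ω
    simp only [Set.mem_iUnion, Set.mem_univ, iff_true]
    refine ⟨fun i => N i.1 ω, fun s hs => ?_⟩
    simp [hpth, Nat.lt_succ_iff.mpr hs]
    intro h; omega
  have hdecomp : ∀ u : ℕ,
      ∫⁻ ω, F (N u ω) ∂μ = ∑' v, ∫⁻ ω in S v, F (N u ω) ∂μ := by
    intro u
    rw [← setLIntegral_univ, ← hcover, lintegral_iUnion hSmeas hdisj]
  have hcyl : ∀ v, ∫⁻ ω in S v, F (N (t + 1) ω) ∂μ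
      ≤ ENNReal.ofReal (1 - nε C D) * ∫⁻ ω in S v, F (N t ω) ∂μ := by
    intro v
    by_cases hz : μ (S v) = 0
    · rw [Measure.restrict_eq_zero.mpr hz, lintegral_zero_measure]; exact bot_le
    have hSfin : μ (S v) ≠ ∞ := measure_ne_top μ _
    set m := v ⟨t, Nat.lt_succ_self t⟩ with hm
    have hpatht : pth v t = m := by simp [hpth]; exact hm.symm
    have hNt : ∀ ω ∈ S v, N t ω = m := fun ω hω => by
      have := hω t le_rfl; rwa [hpatht] at this
    have hRHS : ∫⁻ ω in S v, F (N t ω) ∂μ = F m * μ (S v) := by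
      rw [setLIntegral_congr_fun_ae (hSmeas v)
        (Filter.Eventually.of_forall fun ω hω => by rw [hNt ω hω]), setLIntegral_const]
    have hinter : ∀ (A : Set Ω) (c : ℝ≥0∞), μ[|S v] A = c → μ (S v ∩ A) = c * μ (S v) := by
      intro A c hc
      rw [cond_apply (hSmeas v)] at hc
      calc μ (S v ∩ A) = (μ (S v) * (μ (S v))⁻¹) * μ (S v ∩ A) := by
            rw [ENNReal.mul_inv_cancel hz hSfin, one_mul]
        _ = μ (S v) * ((μ (S v))⁻¹ * μ (S v ∩ A)) := by ring
        _ = c * μ (S v) := by rw [hc]; ring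
    have hnull : ∀ A : Set Ω, MeasurableSet A → μ (S v ∩ A) = μ (S v) →
        ((S v ∩ A : Set Ω) : Set Ω) =ᵐ[μ] (S v : Set Ω) := by
      intro A hA hμA
      have h1 : μ (S v ∩ A) + μ (S v \ A) = μ (S v) := measure_inter_add_diff _ hA
      rw [hμA] at h1
      have h2 : μ (S v \ A) = 0 := by
        have : μ (S v) + μ (S v \ A) = μ (S v) + 0 := by simpa using h1
        exact (ENNReal.add_right_inj hSfin).mp this
      rw [MeasureTheory.ae_eq_set]
      constructor
      · rw [Set.diff_eq_empty.mpr Set.inter_subset_left]; exact measure_empty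
      · rw [Set.diff_self_inter]; exact h2
    rcases Nat.eq_zero_or_pos m with hm0 | hmpos
    · -- absorbed at 0
      have hh := hhold t (pth v) hz
      rw [hpatht, hm0, hpz, hqz] at hh
      norm_num at hh
      have h0 : μ (S v ∩ {ω | N (t + 1) ω = 0}) = μ (S v) := by
        rw [hinter _ 1 hh, one_mul]
      have hA0 : MeasurableSet {ω | N (t + 1) ω = 0} := by
        have : {ω | N (t + 1) ω = 0} = N (t + 1) ⁻¹' {0} := by ext ω; simp
        rw [this]; exact hNm (t + 1) (measurableSet_singleton _)
      rw [setLIntegral_congr (hnull _ hA0 h0).symm]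
      have : ∫⁻ ω in S v ∩ {ω | N (t + 1) ω = 0}, F (N (t + 1) ω) ∂μ
          = F 0 * μ (S v ∩ {ω | N (t + 1) ω = 0}) := by
        rw [setLIntegral_congr_fun_ae ((hSmeas v).inter hA0)
          (Filter.Eventually.of_forall fun ω hω => by rw [hω.2]), setLIntegral_const]
      rw [this]
      have : F 0 = 0 := by simp [hF, nφ_zero]
      rw [this, zero_mul]
      exact bot_le
    · -- interior state, three transitions
      obtain ⟨m', hm'⟩ : ∃ m', m = m' + 1 := ⟨m - 1, by omega⟩
      set Ap := {ω | N (t + 1) ω = m + 1} with hAp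
      set Az := {ω | N (t + 1) ω = m} with hAz
      set An := {ω | N (t + 1) ω = m - 1} with hAn
      have hApm : MeasurableSet Ap := by
        have : Ap = N (t + 1) ⁻¹' {m + 1} := by ext ω; simp [hAp]
        rw [this]; exact hNm (t + 1) (measurableSet_singleton _)
      have hAzm : MeasurableSet Az := by
        have : Az = N (t + 1) ⁻¹' {m} := by ext ω; simp [hAz]
        rw [this]; exact hNm (t + 1) (measurableSet_singleton _)
      have hAnm : MeasurableSet An := by
        have : An = N (t + 1) ⁻¹' {m - 1} := by ext ω; simp [hAn]
        rw [this]; exact hNm (t + 1) (measurableSet_singleton _)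
      have hb := hbirth t (pth v) hz
      rw [hpatht] at hb
      have hd := hdeath t (pth v) (by rw [hpatht]; exact hmpos) hz
      rw [hpatht] at hd
      have hh := hhold t (pth v) hz
      rw [hpatht] at hh
      have hμp : μ (S v ∩ Ap) = ENNReal.ofReal (p m) * μ (S v) := hinter _ _ hb
      have hμn : μ (S v ∩ An) = ENNReal.ofReal (q m) * μ (S v) := hinter _ _ hd
      have hμz : μ (S v ∩ Az) = ENNReal.ofReal (1 - p m - q m) * μ (S v) := hinter _ _ hh
      have hpqm : 0 ≤ 1 - p m - q m := by linarith [hpq1 m]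
      have hsum : ENNReal.ofReal (q m) + ENNReal.ofReal (1 - p m - q m)
          + ENNReal.ofReal (p m) = 1 := by
        rw [← ENNReal.ofReal_add (hq0 m) hpqm, ← ENNReal.ofReal_add (by linarith [hq0 m]) (hp0 m)]
        norm_num
      have hdnz : Disjoint (S v ∩ An) (S v ∩ Az) := by
        have : Disjoint An Az := by
          rw [Set.disjoint_left]; intro ω h1 h2
          simp only [hAn, hAz, Set.mem_setOf_eq] at h1 h2
          omega
        exact this.mono Set.inter_subset_right Set.inter_subset_right
      have hdnzp : Disjoint (S v ∩ An ∪ S v ∩ Az) (S v ∩ Ap) := by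
        have h1 : Disjoint An Ap := by
          rw [Set.disjoint_left]; intro ω h1 h2
          simp only [hAn, hAp, Set.mem_setOf_eq] at h1 h2
          omega
        have h2 : Disjoint Az Ap := by
          rw [Set.disjoint_left]; intro ω h1 h2
          simp only [hAz, hAp, Set.mem_setOf_eq] at h1 h2
          omega
        exact Disjoint.union_left (h1.mono Set.inter_subset_right Set.inter_subset_right)
          (h2.mono Set.inter_subset_right Set.inter_subset_right)
      have hAtot : μ (S v ∩ (An ∪ Az ∪ Ap)) = μ (S v) := by
        rw [Set.inter_union_distrib_left, Set.inter_union_distrib_left,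
          measure_union hdnzp ((hSmeas v).inter hApm),
          measure_union hdnz ((hSmeas v).inter hAzm), hμp, hμn, hμz,
          ← add_mul, ← add_mul, hsum, one_mul]
      rw [setLIntegral_congr (hnull _ (((hAnm.union hAzm).union hApm)) hAtot).symm]
      rw [Set.inter_union_distrib_left, Set.inter_union_distrib_left,
        lintegral_union ((hSmeas v).inter hApm) hdnzp,
        lintegral_union ((hSmeas v).inter hAzm) hdnz]
      have en : ∫⁻ ω in S v ∩ An, F (N (t + 1) ω) ∂μ = F (m - 1) * μ (S v ∩ An) := by
        rw [setLIntegral_congr_fun_ae ((hSmeas v).inter hAnm)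
          (Filter.Eventually.of_forall fun ω hω => by rw [hω.2]), setLIntegral_const]
      have ez : ∫⁻ ω in S v ∩ Az, F (N (t + 1) ω) ∂μ = F m * μ (S v ∩ Az) := by
        rw [setLIntegral_congr_fun_ae ((hSmeas v).inter hAzm)
          (Filter.Eventually.of_forall fun ω hω => by rw [hω.2]), setLIntegral_const]
      have ep : ∫⁻ ω in S v ∩ Ap, F (N (t + 1) ω) ∂μ = F (m + 1) * μ (S v ∩ Ap) := by
        rw [setLIntegral_congr_fun_ae ((hSmeas v).inter hApm)
          (Filter.Eventually.of_forall fun ω hω => by rw [hω.2]), setLIntegral_const]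
      rw [en, ez, ep, hμp, hμn, hμz, hRHS]
      have hφn : ∀ j, 0 ≤ nφ C D j := nφ_nonneg hD hD1
      have key1 : F (m - 1) * (ENNReal.ofReal (q m) * μ (S v))
          = ENNReal.ofReal (q m * nφ C D (m - 1)) * μ (S v) := by
        rw [hF, ← mul_assoc, ← ENNReal.ofReal_mul (hφn _), mul_comm (nφ C D (m - 1))]
      have key2 : F m * (ENNReal.ofReal (1 - p m - q m) * μ (S v))
          = ENNReal.ofReal ((1 - p m - q m) * nφ C D m) * μ (S v) := by
        rw [hF, ← mul_assoc, ← ENNReal.ofReal_mul (hφn _), mul_comm (nφ C D m)]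
      have key3 : F (m + 1) * (ENNReal.ofReal (p m) * μ (S v))
          = ENNReal.ofReal (p m * nφ C D (m + 1)) * μ (S v) := by
        rw [hF, ← mul_assoc, ← ENNReal.ofReal_mul (hφn _), mul_comm (nφ C D (m + 1))]
      rw [key1, key2, key3, ← add_mul, ← add_mul]
      have hdrift : q m * nφ C D (m - 1) + (1 - p m - q m) * nφ C D m + p m * nφ C D (m + 1)
          ≤ (1 - nε C D) * nφ C D m := by
        have hpCm : p m ≤ C / ((m' : ℝ) + 1) := by
          have h1 := hpC m hmpos
          have h2 : ((m : ℕ) : ℝ) = (m' : ℝ) + 1 := by rw [hm']; push_cast; ring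
          rwa [h2] at h1
        have hdr := drift hC hD hD1 m' (p m) (q m) (hp0 m) (hqD m hmpos) (hpq1 m) hpCm
        rw [← hm'] at hdr
        have e1 : m - 1 = m' := by omega
        have e2 : m + 1 = m' + 2 := by omega
        rw [e1, e2]
        linarith
      calc (ENNReal.ofReal (q m * nφ C D (m - 1)) + ENNReal.ofReal ((1 - p m - q m) * nφ C D m)
              + ENNReal.ofReal (p m * nφ C D (m + 1))) * μ (S v)
          = ENNReal.ofReal (q m * nφ C D (m - 1) + (1 - p m - q m) * nφ C D m
              + p m * nφ C D (m + 1)) * μ (S v) := by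
            rw [← ENNReal.ofReal_add (mul_nonneg (hq0 m) (hφn _)) (mul_nonneg hpqm (hφn _)),
              ← ENNReal.ofReal_add (add_nonneg (mul_nonneg (hq0 m) (hφn _))
                (mul_nonneg hpqm (hφn _))) (mul_nonneg (hp0 m) (hφn _))]
        _ ≤ ENNReal.ofReal ((1 - nε C D) * nφ C D m) * μ (S v) :=
            mul_le_mul' (ENNReal.ofReal_le_ofReal hdrift) le_rfl
        _ = ENNReal.ofReal (1 - nε C D) * (F m * μ (S v)) := by
            rw [ENNReal.ofReal_mul (by linarith [nε_lt_one (C := C) hD hD1] : (0:ℝ) ≤ 1 - nε C D),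
              hF, mul_assoc]
  calc ∫⁻ ω, F (N (t + 1) ω) ∂μ
      = ∑' v, ∫⁻ ω in S v, F (N (t + 1) ω) ∂μ := hdecomp (t + 1)
    _ ≤ ∑' v, ENNReal.ofReal (1 - nε C D) * ∫⁻ ω in S v, F (N t ω) ∂μ :=
        ENNReal.tsum_le_tsum hcyl
    _ = ENNReal.ofReal (1 - nε C D) * ∑' v, ∫⁻ ω in S v, F (N t ω) ∂μ :=
        ENNReal.tsum_mul_left
    _ = ENNReal.ofReal (1 - nε C D) * ∫⁻ ω, F (N t ω) ∂μ := by rw [← hdecomp t]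

end Stmt9

open Stmt9 in
/-- High-probability bound on the extinction time of a nice birth-death chain:
for every `k > 0` there is a constant `θ(k)` such that, for all sufficiently
large `n`, `Pr[E(n) ≥ θ(k)·n] ≤ 1/n^k`. -/
theorem stmt_9 (C D : ℝ) (hC : 0 < C) (hD : 0 < D) (hD1 : D < 1) (k : ℝ) (hk : 0 < k) :
    ∃ θ : ℝ, 0 < θ ∧ ∃ n₀ : ℕ, ∀ n : ℕ, n₀ ≤ n →
      ∀ (Ω : Type) (_ : MeasurableSpace Ω) (μ : Measure Ω), IsProbabilityMeasure μ →
      ∀ (N : ℕ → Ω → ℕ) (p q : ℕ → ℝ),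
        (∀ t, Measurable (N t)) →
        (∀ m, 0 ≤ p m) → (∀ m, 0 ≤ q m) → (∀ m, p m + q m ≤ 1) →
        p 0 = 0 → q 0 = 0 →
        (∀ m : ℕ, 0 < m → p m ≤ C / m) →
        (∀ m : ℕ, 0 < m → D ≤ q m) →
        (∀ ω, N 0 ω = n) →
        -- birth transitions, conditionally on any past trajectory
        (∀ (t : ℕ) (path : ℕ → ℕ),
          μ {ω | ∀ s ≤ t, N s ω = path s} ≠ 0 →
          μ[|{ω | ∀ s ≤ t, N s ω = path s}] {ω | N (t + 1) ω = path t + 1}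
            = ENNReal.ofReal (p (path t))) →
        -- death transitions
        (∀ (t : ℕ) (path : ℕ → ℕ), 0 < path t →
          μ {ω | ∀ s ≤ t, N s ω = path s} ≠ 0 →
          μ[|{ω | ∀ s ≤ t, N s ω = path s}] {ω | N (t + 1) ω = path t - 1}
            = ENNReal.ofReal (q (path t))) →
        -- holding steps
        (∀ (t : ℕ) (path : ℕ → ℕ),
          μ {ω | ∀ s ≤ t, N s ω = path s} ≠ 0 →
          μ[|{ω | ∀ s ≤ t, N s ω = path s}] {ω | N (t + 1) ω = path t}
            = ENNReal.ofReal (1 - p (path t) - q (path t))) →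
        μ {ω | ENNReal.ofReal (θ * n) ≤ extinctionTime N ω} ≤
          ENNReal.ofReal (1 / (n : ℝ) ^ k) := by
  have hεp := nε_pos (C := C) hD hD1
  have hε1 := nε_lt_one (C := C) hD hD1
  have hrpos := hr (C := C) hD hD1
  set ε := nε C D with hε
  set A : ℝ := nφ C D (nM C D) + 2 * (max (nr C D) 1) ^ (nM C D) with hA
  have hApos : 0 < A := by
    have := nφ_M_pos (C := C) hD hD1
    have h2 : (0:ℝ) < (max (nr C D) 1) ^ (nM C D) :=
      pow_pos (lt_of_lt_of_le zero_lt_one (le_max_right _ _)) _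
    nlinarith
  obtain ⟨t₀, ht₀⟩ : ∃ t₀ : ℕ, (1 - ε) ^ t₀ * 2 ≤ Real.exp (-(k + 1)) := by
    have h0 : (0:ℝ) ≤ 1 - ε := by linarith
    have h1 : (1 - ε) < 1 := by linarith
    have htd := tendsto_pow_atTop_nhds_zero_of_lt_one h0 h1
    have h2 : (0:ℝ) < Real.exp (-(k + 1)) / 2 := by positivity
    obtain ⟨t₀, ht⟩ := (htd.eventually (gt_mem_nhds h2)).exists
    exact ⟨t₀, by nlinarith⟩
  obtain ⟨n₀, hn₀⟩ : ∃ n₀ : ℕ, ∀ n ≥ n₀, 1 ≤ n ∧ A * Real.exp (-(n : ℝ)) ≤ nr C D := by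
    have htend : Filter.Tendsto (fun n : ℕ => A * Real.exp (-(n : ℝ))) Filter.atTop (nhds 0) := by
      have hb : ∀ n : ℕ, Real.exp (-(n : ℝ)) = (Real.exp (-1)) ^ n := by
        intro n
        rw [← Real.exp_nat_mul]
        congr 1; ring
      have h1 : Filter.Tendsto (fun n : ℕ => (Real.exp (-1)) ^ n) Filter.atTop (nhds 0) :=
        tendsto_pow_atTop_nhds_zero_of_lt_one (Real.exp_pos _).le
          (Real.exp_lt_one_iff.mpr (by norm_num))
      have := h1.const_mul A
      rw [mul_zero] at this
      refine this.congr fun n => ?_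
      rw [hb n]
    have h2 := htend.eventually (gt_mem_nhds hrpos)
    have h3 : ∀ᶠ n : ℕ in Filter.atTop, 1 ≤ n := Filter.eventually_ge_atTop 1
    obtain ⟨n₀, hn₀⟩ := Filter.eventually_atTop.mp (h3.and h2)
    exact ⟨n₀, fun n hn => ⟨(hn₀ n hn).1, (hn₀ n hn).2.le⟩⟩
  refine ⟨(t₀ : ℝ) + 1, by positivity, n₀, ?_⟩
  intro n hn Ω inst μ hprob N p q hNm hp0 hq0 hpq1 hpz hqz hpC hqD hN0 hbirth hdeath hhold
  haveI := hprob
  obtain ⟨hn1, hnA⟩ := hn₀ n hn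
  have hn1R : (1:ℝ) ≤ (n:ℝ) := by exact_mod_cast hn1
  set T := t₀ * n with hT
  set F : ℕ → ℝ≥0∞ := fun m => ENNReal.ofReal (nφ C D m) with hF
  have h0ε : (0:ℝ) ≤ 1 - ε := by linarith
  have hiter : ∀ u : ℕ, ∫⁻ ω, F (N u ω) ∂μ ≤ ENNReal.ofReal ((1 - ε) ^ u * nφ C D n) := by
    intro u
    induction u with
    | zero =>
      have hc : (fun ω => F (N 0 ω)) = fun _ => ENNReal.ofReal (nφ C D n) := by
        funext ω; rw [hF]; simp only; rw [hN0 ω]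
      rw [hc, lintegral_const, measure_univ, mul_one, pow_zero, one_mul]
    | succ u ih =>
      calc ∫⁻ ω, F (N (u + 1) ω) ∂μ
          ≤ ENNReal.ofReal (1 - ε) * ∫⁻ ω, F (N u ω) ∂μ :=
            step hC hD hD1 μ N p q hNm hp0 hq0 hpq1 hpz hqz hpC hbirth hdeath hhold u hqD
        _ ≤ ENNReal.ofReal (1 - ε) * ENNReal.ofReal ((1 - ε) ^ u * nφ C D n) :=
            mul_le_mul' le_rfl ih
        _ = ENNReal.ofReal ((1 - ε) ^ (u + 1) * nφ C D n) := by
            rw [← ENNReal.ofReal_mul h0ε]; congr 1; ring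
  have hrne : ENNReal.ofReal (nr C D) ≠ 0 := (ENNReal.ofReal_pos.mpr hrpos).ne'
  have hmarkov : μ {ω | N T ω ≠ 0}
      ≤ ENNReal.ofReal ((1 - ε) ^ T * nφ C D n) / ENNReal.ofReal (nr C D) := by
    have hm : AEMeasurable (fun ω => F (N T ω)) μ :=
      ((measurable_from_top (f := F)).comp (hNm T)).aemeasurable
    have h1 := mul_meas_ge_le_lintegral₀ hm (ENNReal.ofReal (nr C D))
    have hsub : {ω | N T ω ≠ 0} ⊆ {ω | ENNReal.ofReal (nr C D) ≤ F (N T ω)} := by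
      intro ω hω
      have h2 : 1 ≤ N T ω := Nat.one_le_iff_ne_zero.mpr hω
      have h3 := nφ_mono (C := C) hD hD1 h2
      rw [nφ_one] at h3
      exact ENNReal.ofReal_le_ofReal h3
    rw [ENNReal.le_div_iff_mul_le (Or.inl hrne) (Or.inl ENNReal.ofReal_ne_top)]
    calc μ {ω | N T ω ≠ 0} * ENNReal.ofReal (nr C D)
        = ENNReal.ofReal (nr C D) * μ {ω | N T ω ≠ 0} := mul_comm _ _
      _ ≤ ENNReal.ofReal (nr C D) * μ {ω | ENNReal.ofReal (nr C D) ≤ F (N T ω)} :=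
          mul_le_mul' le_rfl (measure_mono hsub)
      _ ≤ ∫⁻ ω, F (N T ω) ∂μ := h1
      _ ≤ ENNReal.ofReal ((1 - ε) ^ T * nφ C D n) := hiter T
  have hincl : {ω | ENNReal.ofReal (((t₀ : ℝ) + 1) * n) ≤ extinctionTime N ω}
      ⊆ {ω | N T ω ≠ 0} := by
    intro ω hω
    simp only [Set.mem_setOf_eq] at hω ⊢
    intro hzero
    have hle : extinctionTime N ω ≤ (T : ℝ≥0∞) := by
      refine iInf_le_of_le T ?_
      exact iInf_le_of_le hzero le_rfl
    have h2 := le_trans hω hle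
    rw [show ((T : ℕ) : ℝ≥0∞) = ENNReal.ofReal ((T : ℕ) : ℝ) by
      rw [ENNReal.ofReal_natCast]] at h2
    rw [ENNReal.ofReal_le_ofReal_iff (by positivity)] at h2
    have h3 : ((t₀ : ℝ) + 1) * n ≤ (t₀ : ℝ) * n := by
      rw [hT] at h2; push_cast at h2; linarith
    nlinarith
  have hreal : (1 - ε) ^ T * nφ C D n ≤ 1 / (n : ℝ) ^ k * nr C D := by
    have hφg := nφ_growth (C := C) hD hD1 n
    have hnum1 : (1 - ε) ^ T * nφ C D n ≤ ((1 - ε) ^ t₀ * 2) ^ n * A := by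
      rw [hT, pow_mul, mul_pow]
      calc ((1 - ε) ^ t₀) ^ n * nφ C D n ≤ ((1 - ε) ^ t₀) ^ n * (A * 2 ^ n) := by
            apply mul_le_mul_of_nonneg_left _ (by positivity)
            rw [hA]; exact hφg
        _ = ((1 - ε) ^ t₀) ^ n * 2 ^ n * A := by ring
    have hnum2 : ((1 - ε) ^ t₀ * 2) ^ n ≤ Real.exp (-(k + 1)) ^ n := by
      apply pow_le_pow_left₀ (by positivity) ht₀
    have hnum3 : Real.exp (-(k + 1)) ^ n = Real.exp ((n : ℝ) * (-(k + 1))) := by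
      rw [Real.exp_nat_mul]
    have hnk : (n : ℝ) ^ k ≤ Real.exp (k * n) := by
      rw [Real.rpow_def_of_pos (by linarith)]
      apply Real.exp_le_exp.mpr
      have hlog : Real.log n ≤ (n : ℝ) := by
        have := Real.log_le_sub_one_of_pos (x := (n : ℝ)) (by linarith)
        linarith
      nlinarith
    have hnkpos : (0:ℝ) < (n : ℝ) ^ k := Real.rpow_pos_of_pos (by linarith) k
    rw [div_mul_eq_mul_div, one_mul, le_div_iff₀ hnkpos]
    calc (1 - ε) ^ T * nφ C D n * (n : ℝ) ^ k
        ≤ ((1 - ε) ^ t₀ * 2) ^ n * A * (n : ℝ) ^ k := by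
          apply mul_le_mul_of_nonneg_right hnum1 hnkpos.le
      _ ≤ Real.exp ((n : ℝ) * (-(k + 1))) * A * Real.exp (k * n) := by
          rw [← hnum3]
          apply mul_le_mul (mul_le_mul_of_nonneg_right hnum2 hApos.le) hnk hnkpos.le
          positivity
      _ = A * Real.exp (-(n : ℝ)) := by
          rw [mul_comm (Real.exp ((n : ℝ) * (-(k + 1)))) A, mul_assoc, ← Real.exp_add]
          congr 2; ring
      _ ≤ nr C D := hnA
  calc μ {ω | ENNReal.ofReal (((t₀ : ℝ) + 1) * n) ≤ extinctionTime N ω}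
      ≤ μ {ω | N T ω ≠ 0} := measure_mono hincl
    _ ≤ ENNReal.ofReal ((1 - ε) ^ T * nφ C D n) / ENNReal.ofReal (nr C D) := hmarkov
    _ ≤ ENNReal.ofReal (1 / (n : ℝ) ^ k) := by
        apply ENNReal.div_le_of_le_mul
        rw [← ENNReal.ofReal_mul (by positivity)]
        exact ENNReal.ofReal_le_ofReal hreal


end
end

section
/- In the pseudo-coupling (Ŝ, N̂) of a two-species chain and a dominating single-species birth-death chain, if min Ŝ_0 = N̂_0, then almost surely for all t ≥ 0: min Ŝ_t ≤ N̂_t, and the number J_t(Ŝ) of bad non-competitive events in Ŝ up to time t is at most the number B_t(N̂) of births in N̂ up to time t. -/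
/-- Pseudo-coupling invariant: in the joint chain `(Ŝ, N̂)` driven by a common
sequence `ξ` of uniform `[0,1)` variables, where `N̂` is a dominating birth-death
chain (`P(a,b) ≤ p(min{a,b})`, `Q(a,b) ≥ q(min{a,b})`) and `Ŝ` freezes whenever
`min Ŝ_t ≠ N̂_t`, if `min Ŝ_0 = N̂_0` then almost surely (here: for every driving
sequence, i.e. pathwise) `min Ŝ_t ≤ N̂_t` for all `t`, and the number of bad
non-competitive events of `Ŝ` up to time `t` is at most the number of births of
`N̂` up to time `t`. -/
theorem stmt_10
    (P Q : ℕ × ℕ → ℝ) (p q : ℕ → ℝ)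
    (hPnn : ∀ ab, 0 ≤ P ab) (hQnn : ∀ ab, 0 ≤ Q ab) (hPQ : ∀ ab, P ab + Q ab ≤ 1)
    (hpnn : ∀ m, 0 ≤ p m) (hqnn : ∀ m, 0 ≤ q m) (hpq : ∀ m, p m + q m ≤ 1)
    -- domination conditions (D1) and (D2)
    (hD1 : ∀ ab : ℕ × ℕ, P ab ≤ p (min ab.1 ab.2))
    (hD2 : ∀ ab : ℕ × ℕ, q (min ab.1 ab.2) ≤ Q ab)
    -- the driving i.i.d. uniform [0,1) sequence (a fixed realization)
    (ξ : ℕ → ℝ) (hξ : ∀ t, 0 ≤ ξ t ∧ ξ t < 1)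
    (Shat : ℕ → ℕ × ℕ) (Nhat : ℕ → ℕ)
    -- update rules of the single-species chain N̂
    (hNup : ∀ t, ξ t < p (Nhat t) → Nhat (t + 1) = Nhat t + 1)
    (hNdown : ∀ t, 1 - q (Nhat t) ≤ ξ t → Nhat (t + 1) = Nhat t - 1)
    (hNhold : ∀ t, p (Nhat t) ≤ ξ t → ξ t < 1 - q (Nhat t) → Nhat (t + 1) = Nhat t)
    -- update rules of the two-species chain Ŝ
    (hSfreeze : ∀ t, min (Shat t).1 (Shat t).2 ≠ Nhat t → Shat (t + 1) = Shat t)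
    (hSbad : ∀ t, min (Shat t).1 (Shat t).2 = Nhat t → ξ t < P (Shat t) →
      min (Shat (t + 1)).1 (Shat (t + 1)).2 ≤ min (Shat t).1 (Shat t).2 + 1)
    (hSgood : ∀ t, min (Shat t).1 (Shat t).2 = Nhat t → 1 - Q (Shat t) ≤ ξ t →
      min (Shat (t + 1)).1 (Shat (t + 1)).2 = min (Shat t).1 (Shat t).2 - 1)
    (hSneutral : ∀ t, min (Shat t).1 (Shat t).2 = Nhat t →
      P (Shat t) ≤ ξ t → ξ t < 1 - Q (Shat t) →
      min (Shat (t + 1)).1 (Shat (t + 1)).2 ≤ min (Shat t).1 (Shat t).2)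
    (h0 : min (Shat 0).1 (Shat 0).2 = Nhat 0) :
    ∀ t : ℕ,
      min (Shat t).1 (Shat t).2 ≤ Nhat t ∧
      ((Finset.range t).filter fun s =>
          min (Shat s).1 (Shat s).2 = Nhat s ∧ ξ s < P (Shat s)).card ≤
        ((Finset.range t).filter fun s => ξ s < p (Nhat s)).card := by

  -- N̂ decreases by at most one each step
  have Nlb : ∀ t, Nhat t - 1 ≤ Nhat (t + 1) := by
    intro t
    rcases lt_or_ge (ξ t) (p (Nhat t)) with h | h
    · rw [hNup t h]; omega
    · rcases lt_or_ge (ξ t) (1 - q (Nhat t)) with h' | h'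
      · rw [hNhold t h h']; omega
      · rw [hNdown t h']
  -- the pathwise invariant
  have key : ∀ t, min (Shat t).1 (Shat t).2 ≤ Nhat t := by
    intro t
    induction t with
    | zero => exact le_of_eq h0
    | succ t ih =>
      rcases eq_or_lt_of_le ih with heq | hlt
      · -- min Ŝ_t = N̂_t
        rcases lt_or_ge (ξ t) (P (Shat t)) with hb | hb
        · have hp : ξ t < p (Nhat t) := by
            calc ξ t < P (Shat t) := hb
            _ ≤ p (min (Shat t).1 (Shat t).2) := hD1 _
            _ = p (Nhat t) := by rw [heq]
          have := hSbad t heq hb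
          rw [hNup t hp]
          omega
        · rcases lt_or_ge (ξ t) (1 - Q (Shat t)) with hn | hg
          · -- neutral
            have hmono := hSneutral t heq hb hn
            have hq' : ξ t < 1 - q (Nhat t) := by
              have := hD2 (Shat t)
              rw [heq] at this
              linarith
            have hN : Nhat t ≤ Nhat (t + 1) := by
              rcases lt_or_ge (ξ t) (p (Nhat t)) with h | h
              · rw [hNup t h]; omega
              · rw [hNhold t h hq']
            omega
          · -- good
            have := hSgood t heq hg
            have := Nlb t
            omega
      · -- min Ŝ_t < N̂_t : Ŝ frozen
        have hfr := hSfreeze t (by omega)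
        have := Nlb t
        rw [hfr]
        omega
  intro t
  refine ⟨key t, Finset.card_le_card (Finset.monotone_filter_right _ ?_)⟩
  intro s _ hs
  obtain ⟨heq, hb⟩ := hs
  calc ξ s < P (Shat s) := hb
  _ ≤ p (min (Shat s).1 (Shat s).2) := hD1 _
  _ = p (Nhat s) := by rw [heq]
end
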